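/- arXiv:2508.12055 — 6 statements merged into one kernel-verified Lean document; each statement's English description precedes it below -/
import Mathlib

section
/- For any natural numbers n ≥ 1 and r ≥ 1, the sum of multinomial coefficients r!/(k₁!·k₂!·k₃!⋯) over all sequences (k₁, k₂, k₃, …) of nonnegative integers with k₁ + k₂ + k₃ + ⋯ = r and 1·k₁ + 2·k₂ + 3·k₃ + ⋯ = n equals the binomial coefficient C(n−1, r−1). -/
open List Finset Nat

namespace FineAux

/-- Compositions of `n` into `r` positive parts. -/
def posComps (n r : ℕ) : Finset (Fin r → ℕ) :=
  (Finset.Nat.antidiagonalTuple r n).filter fun f => ∀ i, f i ≠ 0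

lemma mem_posComps {n r : ℕ} {f : Fin r → ℕ} :
    f ∈ posComps n r ↔ (∑ i, f i) = n ∧ ∀ i, f i ≠ 0 := by
  simp [posComps, Finset.Nat.mem_antidiagonalTuple]

lemma card_posComps_one (m : ℕ) : (posComps (m + 1) 1).card = 1 := by
  rw [posComps, Finset.Nat.antidiagonalTuple_one, Finset.filter_singleton, if_pos]
  · rfl
  · intro i
    fin_cases i
    simp

lemma posComps_split (n r : ℕ) :
    (posComps (n + 2) (r + 1)).card
      = (posComps (n + 1) r).card + (posComps (n + 1) (r + 1)).card := by
  classical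
  rw [← Finset.card_filter_add_card_filter_not
    (p := fun f => f (Fin.last r) = 1)]
  congr 1
  · apply Finset.card_nbij' (fun f => Fin.init f) (fun g => Fin.snoc g 1)
    · intro f hf
      simp only [Finset.mem_coe, Finset.mem_filter, mem_posComps] at hf
      obtain ⟨⟨hsum, hpos⟩, hlast⟩ := hf
      rw [Fin.sum_univ_castSucc, hlast] at hsum
      refine mem_posComps.mpr ⟨?_, fun i => hpos i.castSucc⟩
      show (∑ i : Fin r, f i.castSucc) = n + 1
      omega
    · intro g hg
      simp only [Finset.mem_coe, mem_posComps] at hg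
      obtain ⟨hsum, hpos⟩ := hg
      simp only [Finset.mem_coe, Finset.mem_filter, mem_posComps]
      refine ⟨⟨?_, ?_⟩, ?_⟩
      · rw [Fin.sum_univ_castSucc]
        simp only [Fin.snoc_castSucc, Fin.snoc_last]
        omega
      · intro i
        refine Fin.lastCases ?_ ?_ i
        · simp
        · intro j; simpa using hpos j
      · simp
    · intro f hf
      simp only [Finset.mem_coe, Finset.mem_filter, mem_posComps] at hf
      have h2 : f (Fin.last r) = 1 := hf.2
      conv_rhs => rw [← Fin.snoc_init_self f]
      rw [h2]
    · intro g _
      simp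
  · apply Finset.card_nbij'
      (fun f => Function.update f (Fin.last r) (f (Fin.last r) - 1))
      (fun g => Function.update g (Fin.last r) (g (Fin.last r) + 1))
    · intro f hf
      simp only [Finset.mem_coe, Finset.mem_filter, mem_posComps] at hf
      obtain ⟨⟨hsum, hpos⟩, hlast⟩ := hf
      have h2 : 2 ≤ f (Fin.last r) := by
        have := hpos (Fin.last r); omega
      rw [Finset.sum_eq_sum_sdiff_singleton_add (Finset.mem_univ (Fin.last r))] at hsum
      refine mem_posComps.mpr ⟨?_, ?_⟩
      · rw [Finset.sum_update_of_mem (Finset.mem_univ _)]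
        omega
      · intro i
        dsimp only
        rcases eq_or_ne i (Fin.last r) with rfl | h
        · rw [Function.update_self]; omega
        · rw [Function.update_of_ne h]; exact hpos i
    · intro g hg
      simp only [Finset.mem_coe, mem_posComps] at hg
      obtain ⟨hsum, hpos⟩ := hg
      rw [Finset.sum_eq_sum_sdiff_singleton_add (Finset.mem_univ (Fin.last r))] at hsum
      simp only [Finset.mem_coe, Finset.mem_filter, mem_posComps]
      refine ⟨⟨?_, ?_⟩, ?_⟩
      · rw [Finset.sum_update_of_mem (Finset.mem_univ _)]
        omega
      · intro i
        rcases eq_or_ne i (Fin.last r) with rfl | h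
        · rw [Function.update_self]; omega
        · rw [Function.update_of_ne h]; exact hpos i
      · rw [Function.update_self]
        have := hpos (Fin.last r); omega
    · intro f hf
      simp only [Finset.mem_coe, Finset.mem_filter, mem_posComps] at hf
      obtain ⟨⟨hsum, hpos⟩, hlast⟩ := hf
      have h1 : 1 ≤ f (Fin.last r) := by have := hpos (Fin.last r); omega
      funext x
      dsimp only
      rcases eq_or_ne x (Fin.last r) with rfl | h
      · rw [Function.update_self, Function.update_self]
        omega
      · rw [Function.update_of_ne h, Function.update_of_ne h]
    · intro g hg
      funext x
      dsimp only
      rcases eq_or_ne x (Fin.last r) with rfl | h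
      · rw [Function.update_self, Function.update_self]
        omega
      · rw [Function.update_of_ne h, Function.update_of_ne h]

lemma card_posComps : ∀ m r : ℕ, (posComps (m + 1) (r + 1)).card = m.choose r := by
  intro m
  induction m with
  | zero =>
    intro r
    cases r with
    | zero => simpa using card_posComps_one 0
    | succ s =>
      rw [Nat.choose_eq_zero_of_lt (by omega), Finset.card_eq_zero,
        Finset.eq_empty_iff_forall_notMem]
      intro f hf
      obtain ⟨hsum, hpos⟩ := mem_posComps.mp hf
      have : ∑ _i : Fin (s + 2), 1 ≤ ∑ i, f i :=
        Finset.sum_le_sum fun i _ => by have := hpos i; omega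
      simp only [Finset.sum_const, Finset.card_univ, Fintype.card_fin, smul_eq_mul,
        mul_one] at this
      omega
  | succ m ih =>
    intro r
    cases r with
    | zero => simpa using card_posComps_one (m + 1)
    | succ s =>
      rw [posComps_split, ih s, ih (s + 1), Nat.choose_succ_succ]

lemma exists_comp_perm_eq {r : ℕ} {f g : Fin r → ℕ} (h : List.ofFn f ~ List.ofFn g) :
    ∃ σ : Equiv.Perm (Fin r), f ∘ σ = g := by
  have h1 : List.ofFn (f ∘ Tuple.sort f) ~ List.ofFn (g ∘ Tuple.sort g) :=
    ((Tuple.sort f).ofFn_comp_perm f).trans (h.trans ((Tuple.sort g).ofFn_comp_perm g).symm)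
  have h2 : f ∘ Tuple.sort f = g ∘ Tuple.sort g :=
    List.ofFn_injective (List.Perm.eq_of_sortedLE
      (Tuple.monotone_sort f).sortedLE_ofFn (Tuple.monotone_sort g).sortedLE_ofFn h1)
  refine ⟨Tuple.sort f * (Tuple.sort g)⁻¹, funext fun x => ?_⟩
  calc f (Tuple.sort f ((Tuple.sort g)⁻¹ x))
      = g (Tuple.sort g ((Tuple.sort g)⁻¹ x)) := congrFun h2 _
    _ = g x := by simp

lemma exists_ofFn_eq (m : Multiset ℕ) {r : ℕ} (h : Multiset.card m = r) :
    ∃ f : Fin r → ℕ, (List.ofFn f : Multiset ℕ) = m := by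
  subst h
  have hl : m.toList.length = Multiset.card m := Multiset.length_toList m
  refine ⟨fun i => m.toList.get (Fin.cast hl.symm i), ?_⟩
  have h2 : List.ofFn (fun i => m.toList.get (Fin.cast hl.symm i)) = m.toList := by
    apply List.ext_get (by simp [hl])
    intro i h1 h2
    simp
  rw [h2, Multiset.coe_toList]

lemma count_eq_card {r : ℕ} (f : Fin r → ℕ) (i : ℕ) :
    Multiset.count i (List.ofFn f : Multiset ℕ) = Fintype.card {a // f a = i} := by
  classical
  rw [← Fin.univ_val_map, Multiset.count_map, Fintype.card_subtype]
  rw [Finset.card, Finset.filter_val]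
  congr 1
  exact Multiset.filter_congr fun a _ => eq_comm

/-- The multinomial coefficient `(card m)! / ∏ (count i)!` of a multiset. -/
noncomputable def oldMultinomial (m : Multiset ℕ) : ℕ := Finsupp.multinomial (Multiset.toFinsupp m)

lemma multiset_multinomial_spec (m : Multiset ℕ) :
    (∏ i ∈ m.toFinset, (m.count i)!) * oldMultinomial m = (Multiset.card m)! := by
  classical
  have h1 : oldMultinomial m = Nat.multinomial m.toFinset m.count := by
    rw [oldMultinomial, Finsupp.multinomial_eq, Multiset.toFinsupp_support]
    exact Nat.multinomial_congr fun a _ => Multiset.toFinsupp_apply _ _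
  rw [h1, Nat.multinomial_spec, Multiset.toFinset_sum_count_eq]

lemma card_anagrams (m : Multiset ℕ) {r : ℕ} (h : Multiset.card m = r) :
    Nat.card {f : Fin r → ℕ // (List.ofFn f : Multiset ℕ) = m} = oldMultinomial m := by
  classical
  obtain ⟨f₀, hf₀⟩ := exists_ofFn_eq m h
  have gdef : ∀ σ : Equiv.Perm (Fin r), (List.ofFn (f₀ ∘ σ) : Multiset ℕ) = m := fun σ =>
    (Multiset.coe_eq_coe.mpr (σ.ofFn_comp_perm f₀)).trans hf₀
  set g : Equiv.Perm (Fin r) → {f : Fin r → ℕ // (List.ofFn f : Multiset ℕ) = m} :=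
    fun σ => ⟨f₀ ∘ σ, gdef σ⟩ with hg
  have gsurj : Function.Surjective g := by
    rintro ⟨f, hf⟩
    obtain ⟨σ, hσ⟩ := exists_comp_perm_eq (Multiset.coe_eq_coe.mp (hf₀.trans hf.symm))
    exact ⟨σ, Subtype.ext hσ⟩
  have hfin : Finite {f : Fin r → ℕ // (List.ofFn f : Multiset ℕ) = m} :=
    Finite.of_surjective g gsurj
  letI : Fintype {f : Fin r → ℕ // (List.ofFn f : Multiset ℕ) = m} := Fintype.ofFinite _
  have hfib : ∀ b : {f : Fin r → ℕ // (List.ofFn f : Multiset ℕ) = m},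
      Fintype.card {σ // g σ = b}
      = Fintype.card {σ : Equiv.Perm (Fin r) // f₀ ∘ σ = f₀} := by
    intro b
    obtain ⟨τ, hτ⟩ := gsurj b
    have hτ' : f₀ ∘ τ = b.1 := congrArg Subtype.val hτ
    refine Fintype.card_congr (Equiv.subtypeEquiv (Equiv.mulRight τ⁻¹) fun σ => ?_)
    rw [Subtype.ext_iff]
    show f₀ ∘ σ = b.1 ↔ f₀ ∘ ⇑(σ * τ⁻¹) = f₀
    rw [← hτ']
    constructor
    · intro hc
      funext x
      have h1 := congrFun hc (τ⁻¹ x)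
      simpa [Function.comp] using h1
    · intro hc
      funext x
      have h1 := congrFun hc (τ x)
      simpa [Function.comp] using h1
  have hcount : r ! = Nat.card {f : Fin r → ℕ // (List.ofFn f : Multiset ℕ) = m}
      * Fintype.card {σ : Equiv.Perm (Fin r) // f₀ ∘ σ = f₀} := by
    have h1 : Fintype.card (Equiv.Perm (Fin r))
        = ∑ b : {f : Fin r → ℕ // (List.ofFn f : Multiset ℕ) = m},
            Fintype.card {σ // g σ = b} := by
      rw [← Fintype.card_sigma]
      exact (Fintype.card_congr (Equiv.sigmaFiberEquiv g)).symm
    have h2 : Fintype.card (Equiv.Perm (Fin r)) = r ! := by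
      rw [Fintype.card_perm, Fintype.card_fin]
    rw [← h2, h1]
    simp_rw [hfib]
    rw [Finset.sum_const, Finset.card_univ, smul_eq_mul, Nat.card_eq_fintype_card]
  have hstab : Fintype.card {σ : Equiv.Perm (Fin r) // f₀ ∘ σ = f₀}
      = ∏ i ∈ m.toFinset, (m.count i)! := by
    rw [DomMulAct.stabilizer_card' f₀]
    have himg : Finset.univ.image f₀ = m.toFinset := by
      rw [Fin.univ_image_def, ← hf₀]
      simp
    rw [himg]
    refine Finset.prod_congr rfl fun i _ => ?_
    rw [← hf₀, count_eq_card]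
  rw [hstab] at hcount
  have hspec := multiset_multinomial_spec m
  rw [h] at hspec
  have hpos : 0 < ∏ i ∈ m.toFinset, (m.count i)! :=
    Finset.prod_pos fun i _ => Nat.factorial_pos _
  apply Nat.eq_of_mul_eq_mul_right hpos
  rw [← hcount, ← hspec]
  ring

lemma toMultiset_sum_eq (k : ℕ →₀ ℕ) :
    (Finsupp.toMultiset k).sum = k.sum fun i v => i * v := by
  classical
  conv_lhs => rw [← Multiset.map_id (Finsupp.toMultiset k)]
  rw [Finset.sum_multiset_map_count, Finsupp.toFinset_toMultiset, Finsupp.sum]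
  refine Finset.sum_congr rfl fun i _ => ?_
  rw [Finsupp.count_toMultiset]
  simp [mul_comm]

lemma mem_and_iff (n r : ℕ) (k : ℕ →₀ ℕ) (h0 : k 0 = 0)
    (hrk : (k.sum fun _ v => v) = r) (hnk : (k.sum fun i v => i * v) = n)
    (f : Fin r → ℕ) :
    (f ∈ posComps n r ∧ (List.ofFn f : Multiset ℕ).toFinsupp = k)
      ↔ (List.ofFn f : Multiset ℕ) = Finsupp.toMultiset k := by
  classical
  have hsum : (Finsupp.toMultiset k).sum = n := by rw [toMultiset_sum_eq]; exact hnk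
  have h0m : (0 : ℕ) ∉ Finsupp.toMultiset k := by
    rw [← Multiset.count_eq_zero, Finsupp.count_toMultiset]
    exact h0
  constructor
  · rintro ⟨-, h⟩
    have h2 := congrArg Finsupp.toMultiset h
    rwa [Multiset.toFinsupp_toMultiset] at h2
  · intro h
    refine ⟨mem_posComps.mpr ⟨?_, ?_⟩, ?_⟩
    · rw [← List.sum_ofFn, ← Multiset.sum_coe, h, hsum]
    · intro i hfi
      apply h0m
      rw [← h]
      exact Multiset.mem_coe.mpr (List.mem_ofFn.mpr ⟨i, hfi⟩)
    · rw [h, Finsupp.toMultiset_toFinsupp]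

lemma card_fiber (n r : ℕ) (k : ℕ →₀ ℕ) (h0 : k 0 = 0)
    (hrk : (k.sum fun _ v => v) = r) (hnk : (k.sum fun i v => i * v) = n) :
    ((posComps n r).filter fun f => (List.ofFn f : Multiset ℕ).toFinsupp = k).card
      = Nat.multinomial k.support k := by
  classical
  have hcard : Multiset.card (Finsupp.toMultiset k) = r := by
    rw [Finsupp.card_toMultiset]; exact hrk
  have h1 : ((posComps n r).filter fun f => (List.ofFn f : Multiset ℕ).toFinsupp = k).card
      = Nat.card {f : Fin r → ℕ // (List.ofFn f : Multiset ℕ) = Finsupp.toMultiset k} := by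
    rw [← Nat.card_eq_finsetCard]
    apply Nat.card_congr
    refine Equiv.subtypeEquivRight fun f => ?_
    rw [Finset.mem_filter]
    exact mem_and_iff n r k h0 hrk hnk f
  rw [h1, card_anagrams _ hcard]
  rw [oldMultinomial, Finsupp.toMultiset_toFinsupp, Finsupp.multinomial_eq]

end FineAux

open FineAux in
/-- Fine's Identity: the sum of multinomial coefficients over all partitions of `n`
into exactly `r` parts (encoded by multiplicities `k i` of part `i`, indexed from 1)
equals `C(n-1, r-1)`. -/
theorem fine_identity (n r : ℕ) (hn : 1 ≤ n) (hr : 1 ≤ r) :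
    ∑ᶠ k : {k : ℕ →₀ ℕ //
        k 0 = 0 ∧ (k.sum fun _ v => v) = r ∧ (k.sum fun i v => i * v) = n},
      Nat.multinomial (k : ℕ →₀ ℕ).support (k : ℕ →₀ ℕ) = (n - 1).choose (r - 1) := by
  classical
  obtain ⟨n, rfl⟩ : ∃ n', n = n' + 1 := ⟨n - 1, by omega⟩
  obtain ⟨r, rfl⟩ : ∃ r', r = r' + 1 := ⟨r - 1, by omega⟩
  simp only [Nat.add_sub_cancel]
  set Φ : (Fin (r + 1) → ℕ) → (ℕ →₀ ℕ) :=
    fun f => (List.ofFn f : Multiset ℕ).toFinsupp with hΦ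
  set A := posComps (n + 1) (r + 1) with hA
  have hiff : ∀ k : ℕ →₀ ℕ,
      (k 0 = 0 ∧ (k.sum fun _ v => v) = r + 1 ∧ (k.sum fun i v => i * v) = n + 1)
        ↔ k ∈ A.image Φ := by
    intro k
    constructor
    · rintro ⟨h0, hr', hn'⟩
      have hc : Multiset.card (Finsupp.toMultiset k) = r + 1 := by
        rw [Finsupp.card_toMultiset]; exact hr'
      obtain ⟨f, hf⟩ := exists_ofFn_eq _ hc
      obtain ⟨hfA, hfk⟩ := (mem_and_iff (n + 1) (r + 1) k h0 hr' hn' f).mpr hf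
      exact Finset.mem_image.mpr ⟨f, hfA, hfk⟩
    · intro hk
      obtain ⟨f, hfA, rfl⟩ := Finset.mem_image.mp hk
      obtain ⟨hsum, hpos⟩ := mem_posComps.mp hfA
      have hfm : Finsupp.toMultiset (Φ f) = (List.ofFn f : Multiset ℕ) :=
        Multiset.toFinsupp_toMultiset _
      refine ⟨?_, ?_, ?_⟩
      · show (List.ofFn f : Multiset ℕ).toFinsupp 0 = 0
        rw [Multiset.toFinsupp_apply, Multiset.count_eq_zero]
        intro h00
        obtain ⟨i, hi⟩ := List.mem_ofFn.mp (Multiset.mem_coe.mp h00)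
        exact hpos i hi
      · have h2 := Finsupp.card_toMultiset (Φ f)
        rw [hfm] at h2
        have h3 : Multiset.card (List.ofFn f : Multiset ℕ) = r + 1 := by simp
        exact (h2.symm.trans h3 :)
      · have h2 := toMultiset_sum_eq (Φ f)
        rw [hfm] at h2
        rw [← h2, Multiset.sum_coe, List.sum_ofFn]
        exact hsum
  have hSet : {k : ℕ →₀ ℕ |
      k 0 = 0 ∧ (k.sum fun _ v => v) = r + 1 ∧ (k.sum fun i v => i * v) = n + 1}
      = ↑(A.image Φ) := Set.ext hiff
  have key : (∑ᶠ k : {k : ℕ →₀ ℕ //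
        k 0 = 0 ∧ (k.sum fun _ v => v) = r + 1 ∧ (k.sum fun i v => i * v) = n + 1},
      Nat.multinomial (k : ℕ →₀ ℕ).support (k : ℕ →₀ ℕ))
      = ∑ k ∈ A.image Φ, Nat.multinomial k.support k := by
    calc (∑ᶠ k : {k : ℕ →₀ ℕ //
          k 0 = 0 ∧ (k.sum fun _ v => v) = r + 1 ∧ (k.sum fun i v => i * v) = n + 1},
          Nat.multinomial (k : ℕ →₀ ℕ).support (k : ℕ →₀ ℕ))
        = ∑ᶠ i ∈ ({k : ℕ →₀ ℕ |
            k 0 = 0 ∧ (k.sum fun _ v => v) = r + 1 ∧ (k.sum fun i v => i * v) = n + 1} :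
            Set (ℕ →₀ ℕ)), Nat.multinomial i.support i :=
          finsum_set_coe_eq_finsum_mem
            (f := fun i : ℕ →₀ ℕ => Nat.multinomial i.support i) _
      _ = ∑ᶠ i ∈ (↑(A.image Φ) : Set (ℕ →₀ ℕ)), Nat.multinomial i.support i := by
          rw [hSet]
      _ = ∑ k ∈ A.image Φ, Nat.multinomial k.support k := finsum_mem_coe_finset _ _
  rw [key]
  have h4 : ∑ k ∈ A.image Φ, Nat.multinomial k.support k
      = ∑ k ∈ A.image Φ, (A.filter fun f => Φ f = k).card := by
    refine Finset.sum_congr rfl fun k hk => ?_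
    obtain ⟨h0, hr', hn'⟩ := (hiff k).mpr hk
    exact (card_fiber (n + 1) (r + 1) k h0 hr' hn').symm
  rw [h4, ← Finset.card_eq_sum_card_image]
  exact card_posComps n r
end

section
/- For any natural number n ≥ 1, the sum over all partitions of n (encoded by multiplicity sequences (k₁, k₂, …) with ∑ᵢ i·kᵢ = n) of the multinomial coefficients (k₁+k₂+⋯)!/(k₁!·k₂!⋯) equals 2^(n−1). -/
open Finset Nat

lemma multinomial_subset {α : Type*} [DecidableEq α] {s t : Finset α} (h : s ⊆ t) (f : α → ℕ)
    (hf : ∀ i ∈ t, i ∉ s → f i = 0) : Nat.multinomial t f = Nat.multinomial s f := by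
  have hp : ∏ i ∈ s, (f i)! = ∏ i ∈ t, (f i)! :=
    Finset.prod_subset h fun i hi his => by rw [hf i hi his]; simp
  have hs : ∑ i ∈ s, f i = ∑ i ∈ t, f i :=
    Finset.sum_subset h fun i hi his => hf i hi his
  have h1 := Nat.multinomial_spec s f
  have h2 := Nat.multinomial_spec t f
  have hpos : 0 < ∏ i ∈ s, (f i)! := Finset.prod_pos fun i _ => Nat.factorial_pos _
  refine Nat.eq_of_mul_eq_mul_left hpos ?_
  rw [h1, hp, h2, hs]

noncomputable def msetMultinomial {α : Type*} [DecidableEq α] (m : Multiset α) : ℕ :=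
  (Multiset.toFinsupp m).multinomial

def listsF {α : Type*} [DecidableEq α] (m : Multiset α) : Finset (List α) := m.lists.toFinset

lemma mem_listsF_iff {α : Type*} [DecidableEq α] (m : Multiset α) (l : List α) :
    l ∈ listsF m ↔ m = ⟦l⟧ := by
  rw [listsF, Multiset.mem_toFinset, Multiset.mem_lists_iff]

lemma multiset_multinomial_eq {α : Type*} [DecidableEq α] (m : Multiset α) :
    msetMultinomial m = Nat.multinomial m.toFinset (fun a => m.count a) := rfl

lemma sum_multinomial_erase {α : Type*} [DecidableEq α] (m : Multiset α) (hm : m ≠ 0) :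
    ∑ a ∈ m.toFinset, msetMultinomial (m.erase a) = msetMultinomial m := by
  classical
  set S := m.toFinset with hS
  have hPpos : 0 < ∏ b ∈ S, (m.count b)! := Finset.prod_pos fun _ _ => Nat.factorial_pos _
  refine Nat.eq_of_mul_eq_mul_left hPpos ?_
  have hNcard : ∑ b ∈ S, m.count b = Multiset.card m := m.toFinset_sum_count_eq
  have hRHS : (∏ b ∈ S, (m.count b)!) * msetMultinomial m = (Multiset.card m)! := by
    rw [multiset_multinomial_eq]
    rw [Nat.multinomial_spec, hNcard]
  rw [hRHS, Finset.mul_sum]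
  have key : ∀ a ∈ S, (∏ b ∈ S, (m.count b)!) * msetMultinomial (m.erase a)
      = m.count a * (Multiset.card m - 1)! := by
    intro a ha
    have ham : a ∈ m := Multiset.mem_toFinset.mp ha
    have hca : 0 < m.count a := Multiset.count_pos.mpr ham
    have hsub : (m.erase a).toFinset ⊆ S := by
      intro b hb
      exact Multiset.mem_toFinset.mpr (Multiset.mem_of_mem_erase (Multiset.mem_toFinset.mp hb))
    have hme : msetMultinomial (m.erase a) = Nat.multinomial S (fun b => (m.erase a).count b) := by
      rw [multiset_multinomial_eq]
      exact (multinomial_subset hsub _ (fun b _ hbs => by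
        simpa [Multiset.count_eq_zero] using fun hbm => hbs (Multiset.mem_toFinset.mpr hbm))).symm
    have hsum' : ∑ b ∈ S, (m.erase a).count b = Multiset.card m - 1 := by
      rw [← Finset.sum_subset hsub (fun b _ hbs => by
        simpa [Multiset.count_eq_zero] using fun hbm => hbs (Multiset.mem_toFinset.mpr hbm))]
      rw [(m.erase a).toFinset_sum_count_eq, Multiset.card_erase_of_mem ham]
      rfl
    have hspec := Nat.multinomial_spec S (fun b => (m.erase a).count b)
    rw [hsum'] at hspec
    -- relate the two products
    have hprod : ∏ b ∈ S, (m.count b)!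
        = m.count a * ∏ b ∈ S, ((m.erase a).count b)! := by
      rw [← Finset.mul_prod_erase S _ ha, ← Finset.mul_prod_erase S (fun b => ((m.erase a).count b)!) ha]
      rw [Multiset.count_erase_self, ← mul_assoc, Nat.mul_factorial_pred hca.ne']
      congr 1
      exact Finset.prod_congr rfl fun b hb =>
        congrArg _ (Multiset.count_erase_of_ne (Finset.mem_erase.mp hb).1 m).symm
    rw [hme, hprod, mul_assoc, hspec]
  rw [Finset.sum_congr rfl key, ← Finset.sum_mul, hNcard,
    Nat.mul_factorial_pred (by simpa using hm)]

lemma lists_eq_biUnion {α : Type*} [DecidableEq α] (m : Multiset α) (hm : m ≠ 0) :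
    listsF m = m.toFinset.biUnion (fun a => (listsF (m.erase a)).image (a :: ·)) := by
  ext l
  simp only [mem_listsF_iff, Finset.mem_biUnion, Finset.mem_image,
    Multiset.mem_toFinset]
  constructor
  · intro h
    cases l with
    | nil => exact absurd h (by simpa using hm)
    | cons a l' =>
      refine ⟨a, ?_, l', ?_, rfl⟩
      · rw [h, Multiset.quot_mk_to_coe, ← Multiset.cons_coe]; exact Multiset.mem_cons_self a _
      · rw [h, Multiset.quot_mk_to_coe, ← Multiset.cons_coe, Multiset.erase_cons_head,
          Multiset.quot_mk_to_coe]
  · rintro ⟨a, ham, l', hl', rfl⟩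
    rw [Multiset.quot_mk_to_coe] at hl'
    rw [Multiset.quot_mk_to_coe, ← Multiset.cons_coe, ← hl', Multiset.cons_erase ham]

lemma card_lists {α : Type*} [DecidableEq α] (m : Multiset α) :
    (listsF m).card = msetMultinomial m := by
  induction m using Multiset.strongInductionOn with
  | ih m ih =>
    rcases eq_or_ne m 0 with rfl | hm
    · rw [listsF, msetMultinomial, ← Multiset.coe_nil, Multiset.lists_coe]
      simp [Finsupp.multinomial_eq]
    · rw [lists_eq_biUnion m hm, Finset.card_biUnion, ← sum_multinomial_erase m hm]
      · refine Finset.sum_congr rfl fun a ha => ?_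
        rw [Finset.card_image_of_injective _ (fun x y h => List.tail_eq_of_cons_eq h)]
        exact ih _ (Multiset.erase_lt.mpr (Multiset.mem_toFinset.mp ha))
      · intro a _ b _ hab
        simp only [Finset.disjoint_left, Finset.mem_image]
        rintro l ⟨la, _, rfl⟩ ⟨lb, _, hlb⟩
        exact hab (List.head_eq_of_cons_eq hlb).symm

lemma toMultiset_sum_eq (f : ℕ →₀ ℕ) :
    (Finsupp.toMultiset f).sum = f.sum fun i v => i * v := by
  induction f using Finsupp.induction with
  | zero => simp
  | single_add a n f haf hn ih =>
    rw [map_add, Multiset.sum_add, ih, Finsupp.sum_add_index' (by simp) (fun i => Nat.mul_add i)]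
    rw [Finsupp.toMultiset_single, Multiset.nsmul_singleton, Multiset.sum_replicate,
      smul_eq_mul, Finsupp.sum_single_index (by simp), mul_comm]

/-- The sum of multinomial coefficients over all partitions of `n ≥ 1`
(encoded by multiplicity sequences) equals `2^(n-1)`. -/
theorem sum_multinomial_partitions_eq_two_pow (n : ℕ) (hn : 1 ≤ n) :
    ∑ᶠ k : {k : ℕ →₀ ℕ // k 0 = 0 ∧ (k.sum fun i v => i * v) = n},
      Nat.multinomial (k : ℕ →₀ ℕ).support (k : ℕ →₀ ℕ) = 2 ^ (n - 1) := by
  classical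
  have hprop : ∀ c : Composition n, ((c.blocks : Multiset ℕ).toFinsupp 0 = 0 ∧
      (((c.blocks : Multiset ℕ).toFinsupp).sum fun i v => i * v) = n) := by
    intro c
    constructor
    · rw [Multiset.toFinsupp_apply, Multiset.count_eq_zero, Multiset.mem_coe]
      intro h0
      exact absurd (c.blocks_pos h0) (lt_irrefl 0)
    · rw [← toMultiset_sum_eq, Multiset.toFinsupp_toMultiset, Multiset.sum_coe]
      exact c.blocks_sum
  let Φ : Composition n → {k : ℕ →₀ ℕ // k 0 = 0 ∧ (k.sum fun i v => i * v) = n} :=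
    fun c => ⟨(c.blocks : Multiset ℕ).toFinsupp, hprop c⟩
  -- construction of a composition from a valid finsupp together with a list realizing it
  have mkComp : ∀ (k : ℕ →₀ ℕ), k 0 = 0 → (k.sum fun i v => i * v) = n →
      ∀ l : List ℕ, (↑l : Multiset ℕ) = Finsupp.toMultiset k →
      ∃ c : Composition n, c.blocks = l := by
    intro k hk0 hksum l hl
    have hpos : ∀ i ∈ l, 0 < i := by
      intro i hi
      have : i ∈ Finsupp.toMultiset k := by rw [← hl]; exact Multiset.mem_coe.mpr hi
      rw [Finsupp.mem_toMultiset, Finsupp.mem_support_iff] at this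
      rcases Nat.eq_zero_or_pos i with rfl | h
      · exact absurd hk0 this
      · exact h
    have hsum : l.sum = n := by
      have : (↑l : Multiset ℕ).sum = l.sum := Multiset.sum_coe l
      rw [← this, hl, toMultiset_sum_eq, hksum]
    exact ⟨⟨l, fun hi => hpos _ hi, hsum⟩, rfl⟩
  have hsurj : Function.Surjective Φ := by
    rintro ⟨k, hk0, hksum⟩
    obtain ⟨c, hc⟩ := mkComp k hk0 hksum (Finsupp.toMultiset k).toList
      (Multiset.coe_toList _)
    refine ⟨c, Subtype.ext ?_⟩
    simp only [Φ, hc, Multiset.coe_toList, Finsupp.toMultiset_toFinsupp]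
  have : Finite {k : ℕ →₀ ℕ // k 0 = 0 ∧ (k.sum fun i v => i * v) = n} :=
    Finite.of_surjective Φ hsurj
  have : Fintype {k : ℕ →₀ ℕ // k 0 = 0 ∧ (k.sum fun i v => i * v) = n} :=
    Fintype.ofFinite _
  rw [finsum_eq_sum_of_fintype]
  have hfiber : ∀ k : {k : ℕ →₀ ℕ // k 0 = 0 ∧ (k.sum fun i v => i * v) = n},
      (Finset.univ.filter fun c => Φ c = k).card
        = Nat.multinomial (k : ℕ →₀ ℕ).support (k : ℕ →₀ ℕ) := by
    rintro ⟨k, hk0, hksum⟩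
    have hm : (listsF (Finsupp.toMultiset k)).card = Nat.multinomial k.support k := by
      rw [card_lists, msetMultinomial, Finsupp.toMultiset_toFinsupp, Finsupp.multinomial_eq]
    rw [← hm]
    apply Finset.card_nbij (i := fun (c : Composition n) => c.blocks)
    · intro c hc
      rw [Finset.mem_coe, Finset.mem_filter] at hc
      have h2 : Multiset.toFinsupp (↑c.blocks : Multiset ℕ) = k := congrArg Subtype.val hc.2
      rw [Multiset.toFinsupp_eq_iff] at h2
      rw [Finset.mem_coe, mem_listsF_iff, Multiset.quot_mk_to_coe]
      exact h2.symm
    · intro c hc c' hc' h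
      exact Composition.ext h
    · rintro l hl
      rw [Finset.mem_coe, mem_listsF_iff, Multiset.quot_mk_to_coe] at hl
      obtain ⟨c, hc⟩ := mkComp k hk0 hksum l hl.symm
      refine ⟨c, ?_, hc⟩
      rw [Finset.mem_coe, Finset.mem_filter]
      refine ⟨Finset.mem_univ _, Subtype.ext ?_⟩
      show Multiset.toFinsupp (↑c.blocks : Multiset ℕ) = k
      rw [hc, Multiset.toFinsupp_eq_iff]
      exact hl.symm
  rw [← composition_card n, Fintype.card, Finset.card_eq_sum_card_fiberwise
    (f := Φ) (t := Finset.univ) (fun c _ => Finset.mem_univ _)]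
  exact Finset.sum_congr rfl fun k _ => (hfiber k).symm
end

section
/- The hyper-Catalan number C_m = (E_m − 1)! / ((V_m − 1)! · ∏_{i≥2} mᵢ!) is a positive integer for every finitely supported m : ℕ → ℕ (indexed from 2), where V_m = 2 + ∑(i−1)mᵢ and E_m = 1 + ∑ i·mᵢ. -/
open Finset Nat

lemma hyperCatalan_dvd_aux (m : ℕ →₀ ℕ) :
    ((m.sum fun i v => (i - 1) * v) + 1).factorial * (m.prod fun _ v => v.factorial) ∣
      ((m.sum fun i v => (i - 1) * v) + (m.sum fun _ v => v)).factorial := by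
  classical
  set n := m.sum fun i v => (i - 1) * v with hn
  set s := m.sum fun _ v => v with hs
  set F := (n + s).factorial with hF
  set D := (n + 1).factorial * (m.prod fun _ v => v.factorial) with hD
  -- prod of factorials over support divides s!
  have hprod : (m.prod fun _ v => v.factorial) ∣ s.factorial := by
    rw [hs, Finsupp.prod, Finsupp.sum]
    exact Nat.prod_factorial_dvd_factorial_sum _ _
  have key1 : D ∣ (n + 1) * F := by
    have h1 : n.factorial * (m.prod fun _ v => v.factorial) ∣ F := by
      calc n.factorial * (m.prod fun _ v => v.factorial)
          ∣ n.factorial * s.factorial := mul_dvd_mul_left _ hprod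
        _ ∣ F := Nat.factorial_mul_factorial_dvd_factorial_add n s
    have : D = (n + 1) * (n.factorial * (m.prod fun _ v => v.factorial)) := by
      rw [hD, Nat.factorial_succ, mul_assoc]
    rw [this]
    exact mul_dvd_mul_left _ h1
  have key2 : ∀ j ∈ m.support, D ∣ m j * F := by
    intro j hj
    have hmj : 1 ≤ m j := Nat.one_le_iff_ne_zero.mpr (Finsupp.mem_support_iff.mp hj)
    set t := ∑ i ∈ m.support.erase j, m i with ht
    have hst : s = m j + t := by
      rw [hs, Finsupp.sum, ← Finset.add_sum_erase _ _ hj]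
    have hprodsplit : (m.prod fun _ v => v.factorial)
        = (m j).factorial * ∏ i ∈ m.support.erase j, (m i).factorial := by
      rw [Finsupp.prod, ← Finset.mul_prod_erase _ _ hj]
    have hDsplit : D = m j *
        ((n + 1).factorial * ((m j - 1).factorial * ∏ i ∈ m.support.erase j, (m i).factorial)) := by
      rw [hD, hprodsplit]
      have : (m j).factorial = m j * (m j - 1).factorial := by
        conv_lhs => rw [show m j = (m j - 1) + 1 by omega]
        rw [Nat.factorial_succ]
        congr 1
        omega
      rw [this]; ring
    rw [hDsplit]
    apply mul_dvd_mul_left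
    have h2 : (m j - 1).factorial * ∏ i ∈ m.support.erase j, (m i).factorial
        ∣ (s - 1).factorial := by
      calc (m j - 1).factorial * ∏ i ∈ m.support.erase j, (m i).factorial
          ∣ (m j - 1).factorial * t.factorial :=
            mul_dvd_mul_left _ (Nat.prod_factorial_dvd_factorial_sum _ _)
        _ ∣ ((m j - 1) + t).factorial := Nat.factorial_mul_factorial_dvd_factorial_add _ _
        _ = (s - 1).factorial := by congr 1; omega
    calc (n + 1).factorial * ((m j - 1).factorial * ∏ i ∈ m.support.erase j, (m i).factorial)
        ∣ (n + 1).factorial * (s - 1).factorial := mul_dvd_mul_left _ h2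
      _ ∣ ((n + 1) + (s - 1)).factorial := Nat.factorial_mul_factorial_dvd_factorial_add _ _
      _ = F := by rw [hF]; congr 1; omega
  set g := m.support.gcd m with hg
  have hgn : g ∣ n := by
    rw [hn, Finsupp.sum]
    exact Finset.dvd_sum fun i hi => Dvd.dvd.mul_left (Finset.gcd_dvd hi) _
  have hcop : Nat.Coprime (n + 1) g :=
    Nat.Coprime.coprime_dvd_right hgn (by
      have : Nat.gcd (1 + n) n = Nat.gcd 1 n := Nat.gcd_add_self_left n 1
      simpa [Nat.Coprime, Nat.add_comm] using this)
  have key3 : D ∣ g * F := by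
    have h1 : D ∣ m.support.gcd (fun i => m i * F) := Finset.dvd_gcd key2
    have h2 : m.support.gcd (fun i => m i * F) = g * F := by
      rw [hg, Finset.gcd_mul_right]
      simp
    rwa [h2] at h1
  have := Nat.dvd_gcd key1 key3
  rwa [Nat.gcd_mul_right, hcop, one_mul] at this

/-- The hyper-Catalan number `C_m = (E_m - 1)! / ((V_m - 1)! ∏ (m i)!)` is a
positive integer: the denominator divides the numerator and the quotient is positive. -/
theorem hyperCatalan_pos_int (m : ℕ →₀ ℕ) (hm : ∀ i < 2, m i = 0) :
    (((2 + m.sum fun i v => (i - 1) * v) - 1).factorial *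
        m.prod fun _ v => v.factorial) ∣ ((1 + m.sum fun i v => i * v) - 1).factorial ∧
    0 < ((1 + m.sum fun i v => i * v) - 1).factorial /
        (((2 + m.sum fun i v => (i - 1) * v) - 1).factorial *
          m.prod fun _ v => v.factorial) := by
  classical
  have hsum : (m.sum fun i v => i * v)
      = (m.sum fun i v => (i - 1) * v) + (m.sum fun _ v => v) := by
    rw [Finsupp.sum, Finsupp.sum, Finsupp.sum, ← Finset.sum_add_distrib]
    apply Finset.sum_congr rfl
    intro i hi
    have h2 : 2 ≤ i := by
      by_contra h
      exact (Finsupp.mem_support_iff.mp hi) (hm i (by omega))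
    calc i * m i = ((i - 1) + 1) * m i := by rw [Nat.sub_add_cancel (by omega)]
      _ = (i - 1) * m i + m i := by ring
  have e1 : (2 + m.sum fun i v => (i - 1) * v) - 1 = (m.sum fun i v => (i - 1) * v) + 1 := by
    omega
  have e2 : (1 + m.sum fun i v => i * v) - 1 = m.sum fun i v => i * v := by omega
  rw [e1, e2, hsum]
  have hdvd := hyperCatalan_dvd_aux m
  refine ⟨hdvd, ?_⟩
  have hDpos : 0 < ((m.sum fun i v => (i - 1) * v) + 1).factorial *
      (m.prod fun _ v => v.factorial) :=
    Nat.mul_pos (Nat.factorial_pos _) (Finset.prod_pos fun i _ => Nat.factorial_pos _)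
  exact Nat.div_pos (Nat.le_of_dvd (Nat.factorial_pos _) hdvd) hDpos
end

section
/- Let E ≥ 1 and m₁ be natural numbers. Then ∑ over finitely supported (k₁, k₂, …) of nonnegative integers with ∑_{i≥1} kᵢ = E and ∑_{i≥1} i·kᵢ = m₁ + E of the multinomial coefficient E!/(k₁!k₂!⋯) equals C(m₁ + E − 1, m₁). -/
open Finset Nat

private lemma map_univ_val_eq_ofFn {n : ℕ} (g : Fin n → ℕ) :
    Multiset.map g Finset.univ.val = ↑(List.ofFn g) := by
  rw [Fin.univ_def]
  show Multiset.map g ↑(List.finRange n) = _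
  rw [Multiset.map_coe, ← List.ofFn_eq_map]

private lemma exists_perm_comp {n : ℕ} {g g₀ : Fin n → ℕ}
    (h : Multiset.map g Finset.univ.val = Multiset.map g₀ Finset.univ.val) :
    ∃ σ : Equiv.Perm (Fin n), g = g₀ ∘ σ := by
  rw [map_univ_val_eq_ofFn, map_univ_val_eq_ofFn, Multiset.coe_eq_coe] at h
  have h1 : List.Perm (List.ofFn (g ∘ Tuple.sort g)) (List.ofFn (g₀ ∘ Tuple.sort g₀)) :=
    (((Tuple.sort g).ofFn_comp_perm g).trans h).trans
      ((Tuple.sort g₀).ofFn_comp_perm g₀).symm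
  have h3 : g ∘ Tuple.sort g = g₀ ∘ Tuple.sort g₀ :=
    List.ofFn_injective (List.Perm.eq_of_sortedLE
      (List.sortedLE_ofFn_iff.mpr (Tuple.monotone_sort g))
      (List.sortedLE_ofFn_iff.mpr (Tuple.monotone_sort g₀)) h1)
  refine ⟨(Tuple.sort g).symm.trans (Tuple.sort g₀), funext fun x => ?_⟩
  have := congrFun h3 ((Tuple.sort g).symm x)
  simpa using this

private lemma nat_card_fiber_sum {α β : Type*} [Fintype α] [Fintype β] (f : α → β) :
    Fintype.card α = ∑ b : β, Nat.card {a : α // f a = b} := by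
  classical
  rw [← Finset.card_univ, Finset.card_eq_sum_card_fiberwise (fun x _ => Finset.mem_univ (f x))]
  refine Finset.sum_congr rfl fun b _ => ?_
  rw [Nat.card_eq_fintype_card, Fintype.card_subtype]

private lemma card_tuple_fiber_list (l : List ℕ) :
    Nat.card {g : Fin l.length → ℕ // Multiset.map g Finset.univ.val = ↑l} =
      Nat.multinomial (↑l : Multiset ℕ).toFinset (↑l : Multiset ℕ).count := by
  classical
  set m : Multiset ℕ := ↑l with hml
  set g₀ : Fin l.length → ℕ := l.get with hg₀def
  have hg₀m : Multiset.map g₀ Finset.univ.val = m := by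
    rw [map_univ_val_eq_ofFn]
    exact congrArg _ (List.ofFn_get l)
  set F := {g : Fin l.length → ℕ // Multiset.map g Finset.univ.val = m} with hF
  set Φ : Equiv.Perm (Fin l.length) → F := fun σ =>
    ⟨g₀ ∘ σ, by
      rw [map_univ_val_eq_ofFn, ← hg₀m, map_univ_val_eq_ofFn g₀, Multiset.coe_eq_coe]
      exact σ.ofFn_comp_perm g₀⟩ with hΦ
  have hΦsurj : Function.Surjective Φ := by
    rintro ⟨g, hg⟩
    obtain ⟨σ, hσ⟩ := exists_perm_comp (hg.trans hg₀m.symm)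
    exact ⟨σ, Subtype.ext hσ.symm⟩
  haveI : Finite F := Finite.of_surjective Φ hΦsurj
  haveI : Fintype F := Fintype.ofFinite F
  set P : ℕ := ∏ i ∈ m.toFinset, (m.count i)! with hP
  have himg : Finset.univ.image g₀ = m.toFinset := by
    ext i
    simp only [Finset.mem_image, Finset.mem_univ, true_and, Multiset.mem_toFinset, ← hg₀m,
      Multiset.mem_map, Finset.mem_univ_val]
  have hcnt : ∀ i, Fintype.card {a : Fin l.length // g₀ a = i} = m.count i := by
    intro i
    rw [Fintype.card_subtype, ← hg₀m, Multiset.count_map, Finset.card_def, Finset.filter_val]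
    congr 1
    exact Multiset.filter_congr fun x _ => eq_comm
  have key : ∀ gg : F, Nat.card {σ : Equiv.Perm (Fin l.length) // Φ σ = gg} = P := by
    intro gg
    obtain ⟨τ, hτ⟩ := exists_perm_comp (gg.2.trans hg₀m.symm)
    have e1 : {σ : Equiv.Perm (Fin l.length) // Φ σ = gg} ≃
        {σ : Equiv.Perm (Fin l.length) // g₀ ∘ σ = gg.1} :=
      Equiv.subtypeEquivRight (fun σ => by
        rw [Subtype.ext_iff])
    have e2 : {σ : Equiv.Perm (Fin l.length) // g₀ ∘ σ = gg.1} ≃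
        {σ : Equiv.Perm (Fin l.length) // g₀ ∘ σ = g₀} := by
      refine Equiv.subtypeEquiv (Equiv.mulRight τ⁻¹) (fun σ => ?_)
      rw [hτ]
      constructor
      · intro h; funext x
        have := congrFun h (τ⁻¹ x)
        simpa using this
      · intro h; funext x
        have := congrFun h (τ x)
        simpa using this
    rw [Nat.card_congr (e1.trans e2), Nat.card_eq_fintype_card,
      DomMulAct.stabilizer_card' g₀, himg]
    exact Finset.prod_congr rfl fun i _ => by rw [hcnt]
  have hperm : Fintype.card (Equiv.Perm (Fin l.length)) = Fintype.card F * P := by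
    rw [nat_card_fiber_sum Φ]
    simp only [key, Finset.sum_const, Finset.card_univ, smul_eq_mul]
  have hsum : ∑ i ∈ m.toFinset, m.count i = l.length := by
    rw [Multiset.toFinset_sum_count_eq]
    simp [hml]
  have hspec := Nat.multinomial_spec m.toFinset m.count
  rw [hsum] at hspec
  have hfact : Fintype.card (Equiv.Perm (Fin l.length)) = (l.length)! := by
    rw [Fintype.card_perm, Fintype.card_fin]
  have hPpos : 0 < P := Finset.prod_pos fun i _ => Nat.factorial_pos _
  have : Fintype.card F * P = Nat.multinomial m.toFinset m.count * P := by
    rw [← hperm, hfact, ← hspec, mul_comm]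
  rw [Nat.card_eq_fintype_card]
  exact Nat.eq_of_mul_eq_mul_right hPpos this

private lemma card_tuple_fiber {n : ℕ} {m : Multiset ℕ} (hm : Multiset.card m = n) :
    Nat.card {g : Fin n → ℕ // Multiset.map g Finset.univ.val = m} =
      Nat.multinomial m.toFinset m.count := by
  subst hm
  induction m using Quotient.inductionOn with
  | _ l => exact card_tuple_fiber_list l

private lemma exists_tuple {n : ℕ} {m : Multiset ℕ} (hm : Multiset.card m = n) :
    ∃ g : Fin n → ℕ, Multiset.map g Finset.univ.val = m := by
  subst hm
  induction m using Quotient.inductionOn with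
  | _ l => exact ⟨l.get, (map_univ_val_eq_ofFn l.get).trans (congrArg _ (List.ofFn_get l))⟩

private lemma toFinsupp_sum_eq (s : Multiset ℕ) :
    (s.toFinsupp.sum fun _ v => v) = Multiset.card s := by
  rw [show (fun (_ : ℕ) (v : ℕ) => v) = (fun _ => id) from rfl, ← Finsupp.card_toMultiset,
    Multiset.toFinsupp_toMultiset]

private lemma toFinsupp_sum_mul (s : Multiset ℕ) :
    (s.toFinsupp.sum fun i v => i * v) = s.sum := by
  induction s using Multiset.induction_on with
  | empty => simp
  | cons a s ih =>
    rw [← Multiset.singleton_add, map_add, Multiset.toFinsupp_singleton,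
      Finsupp.sum_add_index' (fun i => mul_zero i) (fun i v₁ v₂ => mul_add i v₁ v₂),
      Finsupp.sum_single_index (mul_zero a), ih]
    simp [Multiset.sum_cons, mul_comm]

/-- Fine's Identity reparametrized with `n = m₁ + E`, `r = E`: the sum of
multinomial coefficients `E!/(k₁!k₂!⋯)` over multiplicity sequences with
`∑ kᵢ = E` and `∑ i·kᵢ = m₁ + E` equals `C(m₁ + E - 1, m₁)`. -/
theorem fine_identity_tubdigon (E m₁ : ℕ) (hE : 1 ≤ E) :
    ∑ᶠ k : {k : ℕ →₀ ℕ //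
        k 0 = 0 ∧ (k.sum fun _ v => v) = E ∧ (k.sum fun i v => i * v) = m₁ + E},
      Nat.multinomial (k : ℕ →₀ ℕ).support (k : ℕ →₀ ℕ)
      = (m₁ + E - 1).choose m₁ := by
  classical
  set I := {k : ℕ →₀ ℕ //
      k 0 = 0 ∧ (k.sum fun _ v => v) = E ∧ (k.sum fun i v => i * v) = m₁ + E} with hI
  set D := {f : Fin E → ℕ // ∑ i, f i = m₁} with hD
  haveI : Fintype D := Fintype.ofEquiv _ (Sym.equivNatSumOfFintype (Fin E) m₁)
  have hMcard : ∀ f : Fin E → ℕ,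
      Multiset.card (Multiset.map (fun j => f j + 1) Finset.univ.val) = E := by
    intro f; simp
  have hM0 : ∀ f : Fin E → ℕ,
      (0 : ℕ) ∉ Multiset.map (fun j => f j + 1) Finset.univ.val := by
    intro f h
    rw [Multiset.mem_map] at h
    obtain ⟨j, _, hj⟩ := h
    exact Nat.succ_ne_zero _ hj
  have hsum_univ : ∀ g : Fin E → ℕ, (Multiset.map g Finset.univ.val).sum = ∑ j, g j := by
    intro g; rfl
  have hMsum : ∀ f : Fin E → ℕ,
      (Multiset.map (fun j => f j + 1) Finset.univ.val).sum = (∑ j, f j) + E := by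
    intro f
    rw [hsum_univ, Finset.sum_add_distrib, Finset.sum_const, Finset.card_univ,
      Fintype.card_fin, smul_eq_mul, mul_one]
  set Ψ : D → I := fun f =>
    ⟨(Multiset.map (fun j => (f : Fin E → ℕ) j + 1) Finset.univ.val).toFinsupp, by
        rw [Multiset.toFinsupp_apply]
        exact Multiset.count_eq_zero.mpr (hM0 f.1), by
        rw [toFinsupp_sum_eq]
        exact hMcard f.1, by
        rw [toFinsupp_sum_mul, hMsum, f.2]⟩ with hΨ
  have hΨ_val : ∀ (f : D) (k : I),
      (Ψ f = k ↔ Multiset.map (fun j => (f : Fin E → ℕ) j + 1) Finset.univ.val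
        = Finsupp.toMultiset k.1) := by
    intro f k
    rw [Subtype.ext_iff, hΨ]
    exact Multiset.toFinsupp_eq_iff
  -- fibers
  have fib : ∀ k : I, Nat.card {f : D // Ψ f = k} =
      Nat.multinomial (k : ℕ →₀ ℕ).support (k : ℕ →₀ ℕ) := by
    rintro ⟨k, hk0, hkE, hkm⟩
    set m := Finsupp.toMultiset k with hm
    have hcard : Multiset.card m = E := by
      rw [hm, Finsupp.card_toMultiset]; exact hkE
    have hmsum : m.sum = m₁ + E := by
      rw [hm, ← toFinsupp_sum_mul, Finsupp.toMultiset_toFinsupp]; exact hkm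
    have h0m : (0 : ℕ) ∉ m := by
      intro h
      exact absurd (by rw [hm, Finsupp.count_toMultiset]; exact hk0)
        (Multiset.count_ne_zero.mpr h)
    have hq0 : ∀ (g : Fin E → ℕ), Multiset.map g Finset.univ.val = m → ∀ j, g j ≠ 0 := by
      intro g hg j hj
      exact h0m (by rw [← hg]; exact Multiset.mem_map.mpr ⟨j, Finset.mem_univ_val j, hj⟩)
    have hmap1 : ∀ q : {g : Fin E → ℕ // Multiset.map g Finset.univ.val = m},
        Multiset.map (fun j => (q.1 j - 1) + 1) Finset.univ.val = m := by
      intro q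
      exact (Multiset.map_congr rfl fun j _ => by
        have := hq0 q.1 q.2 j; omega).trans q.2
    have hsum' : ∀ q : {g : Fin E → ℕ // Multiset.map g Finset.univ.val = m},
        ∑ j, (q.1 j - 1) = m₁ := by
      intro q
      have h1 : ∑ j, ((q.1 j - 1) + 1) = m₁ + E := by
        calc ∑ j, ((q.1 j - 1) + 1)
            = (Multiset.map (fun j => (q.1 j - 1) + 1) Finset.univ.val).sum :=
              (hsum_univ _).symm
          _ = m.sum := by rw [hmap1 q]
          _ = m₁ + E := hmsum
      have h2 : ∑ j, ((q.1 j - 1) + 1) = (∑ j, (q.1 j - 1)) + E := by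
        rw [Finset.sum_add_distrib, Finset.sum_const, Finset.card_univ, Fintype.card_fin,
          smul_eq_mul, mul_one]
      omega
    have e : {f : D // Ψ f = ⟨k, hk0, hkE, hkm⟩} ≃
        {g : Fin E → ℕ // Multiset.map g Finset.univ.val = m} := by
      refine ⟨fun p => ⟨fun j => (p.1 : Fin E → ℕ) j + 1, (hΨ_val p.1 _).mp p.2⟩,
        fun q => ⟨⟨fun j => q.1 j - 1, hsum' q⟩, (hΨ_val _ _).mpr (hmap1 q)⟩, ?_, ?_⟩
      · intro p
        apply Subtype.ext; apply Subtype.ext; funext j; simp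
      · intro q
        apply Subtype.ext; funext j
        exact Nat.succ_pred_eq_of_pos (Nat.pos_of_ne_zero (hq0 q.1 q.2 j))
    rw [Nat.card_congr e, card_tuple_fiber hcard,
      show m.toFinset = k.support from Finsupp.toFinset_toMultiset k]
    exact Nat.multinomial_congr fun a _ => Finsupp.count_toMultiset k a
  have hΨsurj : Function.Surjective Ψ := by
    intro k
    have pos : 0 < Nat.card {f : D // Ψ f = k} := by
      rw [fib k]; exact Nat.multinomial_pos _ _
    obtain ⟨⟨f, hf⟩⟩ := (Nat.card_pos_iff.mp pos).1
    exact ⟨f, hf⟩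
  haveI : Finite I := Finite.of_surjective Ψ hΨsurj
  haveI : Fintype I := Fintype.ofFinite I
  rw [finsum_eq_sum_of_fintype]
  have : ∑ k : I, Nat.multinomial (k : ℕ →₀ ℕ).support (k : ℕ →₀ ℕ)
      = ∑ k : I, Nat.card {f : D // Ψ f = k} :=
    Finset.sum_congr rfl fun k _ => (fib k).symm
  rw [this, ← nat_card_fiber_sum Ψ,
    Fintype.card_congr (Sym.equivNatSumOfFintype (Fin E) m₁).symm,
    Sym.card_sym_eq_choose, Fintype.card_fin, Nat.add_comm E m₁]
end

section
/- Let S ∈ ℚ[[t₂, t₃, …, t_N]] be the formal power series S = ∑_m C_m t^m where C_m = (E_m−1)!/((V_m−1)!·∏mᵢ!), V_m = 2+∑(i−1)mᵢ, E_m = 1+∑ i·mᵢ, and the sum is over finitely supported m supported on {2,…,N}. Then S satisfies S = 1 + t₂S² + t₃S³ + ⋯ + t_N S^N. -/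
open Finsupp MvPowerSeries Finset

namespace SoftPolyAux

/-- total edge weight -/
def eW (m : ℕ →₀ ℕ) : ℕ := m.sum fun i v => i * v
/-- total face count -/
def fW (m : ℕ →₀ ℕ) : ℕ := m.sum fun _ v => v
/-- product of factorials -/
def pW (m : ℕ →₀ ℕ) : ℕ := m.prod fun _ v => v.factorial

/-- support condition -/
def Good (N : ℕ) (m : ℕ →₀ ℕ) : Prop := ∀ i ∈ m.support, 2 ≤ i ∧ i ≤ N

open Classical in
/-- coefficients of the k-th power of the hyper-Catalan series -/
noncomputable def A (N k : ℕ) (m : ℕ →₀ ℕ) : ℚ :=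
  if k = 0 then (if m = 0 then 1 else 0)
  else if Good N m then
    ((k * (eW m + k - 1).factorial : ℕ) : ℚ) / (((eW m - fW m + k).factorial * pW m : ℕ) : ℚ)
  else 0

lemma eW_add (a b : ℕ →₀ ℕ) : eW (a + b) = eW a + eW b :=
  Finsupp.sum_add_index' (fun _ => by ring) (fun _ _ _ => by ring)

lemma fW_add (a b : ℕ →₀ ℕ) : fW (a + b) = fW a + fW b :=
  Finsupp.sum_add_index' (fun _ => rfl) (fun _ _ _ => rfl)

lemma eW_single (p : ℕ) : eW (Finsupp.single p 1) = p := by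
  rw [eW, Finsupp.sum_single_index] <;> ring

lemma fW_single (p : ℕ) : fW (Finsupp.single p 1) = 1 := by
  rw [fW, Finsupp.sum_single_index rfl]

lemma fW_eq_zero {m : ℕ →₀ ℕ} (h : fW m = 0) : m = 0 := by
  rw [fW, Finsupp.sum, Finset.sum_eq_zero_iff] at h
  ext i
  by_cases hi : i ∈ m.support
  · exact h i hi
  · simpa using Finsupp.notMem_support_iff.mp hi

lemma pW_ne_zero (m : ℕ →₀ ℕ) : pW m ≠ 0 :=
  Finset.prod_ne_zero_iff.mpr fun i _ => Nat.factorial_ne_zero _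

lemma good_sub {N : ℕ} {m d : ℕ →₀ ℕ} (h : Good N m) : Good N (m - d) :=
  fun i hi => h i (Finsupp.support_tsub hi)

lemma good_ef {N : ℕ} {m : ℕ →₀ ℕ} (h : Good N m) : 2 * fW m ≤ eW m := by
  rw [fW, eW, Finsupp.sum, Finsupp.sum, Finset.mul_sum]
  exact Finset.sum_le_sum fun i hi => Nat.mul_le_mul_right _ (h i hi).1

section decomp
variable {p : ℕ} {m : ℕ →₀ ℕ}

lemma sub_add_single (hp : Finsupp.single p 1 ≤ m) :
    m - Finsupp.single p 1 + Finsupp.single p 1 = m :=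
  tsub_add_cancel_of_le hp

lemma eW_sub (hp : Finsupp.single p 1 ≤ m) : eW m = eW (m - Finsupp.single p 1) + p := by
  conv_lhs => rw [← sub_add_single hp]
  rw [eW_add, eW_single]

lemma fW_sub (hp : Finsupp.single p 1 ≤ m) : fW m = fW (m - Finsupp.single p 1) + 1 := by
  conv_lhs => rw [← sub_add_single hp]
  rw [fW_add, fW_single]

lemma pW_sub (hp : Finsupp.single p 1 ≤ m) : pW m = m p * pW (m - Finsupp.single p 1) := by
  classical
  have hm1 : 1 ≤ m p := Finsupp.single_le_iff.mp hp
  have hmem : p ∈ m.support := Finsupp.mem_support_iff.mpr (by omega)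
  have hsub : (m - Finsupp.single p 1).support ⊆ m.support := Finsupp.support_tsub
  have h1 : pW m = ∏ i ∈ m.support, (m i).factorial := rfl
  have h2 : pW (m - Finsupp.single p 1) = ∏ i ∈ m.support, (((m - Finsupp.single p 1) : ℕ →₀ ℕ) i).factorial :=
    Finsupp.prod_of_support_subset _ hsub (fun _ v => v.factorial) (fun i _ => rfl)
  have hpp : ((m - Finsupp.single p 1) : ℕ →₀ ℕ) p = m p - 1 := by
    rw [Finsupp.tsub_apply, Finsupp.single_apply, if_pos rfl]
  have hfac : (m p).factorial = m p * (m p - 1).factorial := by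
    conv_lhs => rw [show m p = (m p - 1) + 1 by omega]
    rw [Nat.factorial_succ]
    congr 1
    omega
  have h3 : ∏ i ∈ m.support.erase p, (((m - Finsupp.single p 1) : ℕ →₀ ℕ) i).factorial
      = ∏ i ∈ m.support.erase p, (m i).factorial := by
    refine Finset.prod_congr rfl fun i hi => ?_
    rw [Finsupp.tsub_apply, Finsupp.single_apply, if_neg (Finset.mem_erase.mp hi).1.symm,
      Nat.sub_zero]
  rw [h1, h2, ← Finset.mul_prod_erase _ _ hmem,
    ← Finset.mul_prod_erase _ (fun i => (((m - Finsupp.single p 1) : ℕ →₀ ℕ) i).factorial) hmem,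
    h3, hpp, hfac, mul_assoc]

end decomp

lemma A_zero_right (N k : ℕ) : A N k 0 = 1 := by
  rcases k with _ | k
  · simp [A]
  · have hk' : k + 1 ≠ 0 := Nat.succ_ne_zero k
    have hg : Good N 0 := by intro i hi; simp at hi
    rw [A, if_neg hk', if_pos hg]
    have h1 : eW (0 : ℕ →₀ ℕ) = 0 := rfl
    have h2 : fW (0 : ℕ →₀ ℕ) = 0 := rfl
    have h3 : pW (0 : ℕ →₀ ℕ) = 1 := rfl
    rw [h1, h2, h3]
    rw [show 0 + (k+1) - 1 = k by omega, show 0 - 0 + (k+1) = k + 1 by omega,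
      Nat.factorial_succ, mul_one]
    rw [div_self]
    exact_mod_cast Nat.mul_ne_zero (Nat.succ_ne_zero k) (Nat.factorial_ne_zero k)

/-- the key numeric recurrence -/
lemma R_num (N k : ℕ) (m : ℕ →₀ ℕ) :
    A N (k+1) m = A N k m + ∑ p ∈ Finset.Icc 2 N,
      (if Finsupp.single p 1 ≤ m then A N (k+p) (m - Finsupp.single p 1) else 0) := by
  classical
  by_cases hm0 : m = 0
  · subst hm0
    have hz : ∀ p ∈ Finset.Icc 2 N,
        (if Finsupp.single p 1 ≤ (0 : ℕ →₀ ℕ) then A N (k+p) (0 - Finsupp.single p 1) else 0)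
          = 0 := by
      intro p hp
      rw [if_neg]
      intro h
      have h1 := Finsupp.single_le_iff.mp h
      simp at h1
    rw [Finset.sum_eq_zero hz, A_zero_right, A_zero_right, add_zero]
  by_cases hg : Good N m
  swap
  · -- bad support case: everything vanishes
    have hbadex : ∃ i ∈ m.support, ¬(2 ≤ i ∧ i ≤ N) := by
      by_contra h
      push_neg at h
      exact hg fun i hi => h i hi
    obtain ⟨i, hi, hiN⟩ := hbadex
    have hA1 : A N (k+1) m = 0 := by rw [A, if_neg (Nat.succ_ne_zero k), if_neg hg]
    have hAk : A N k m = 0 := by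
      rcases k with _ | k
      · rw [A, if_pos rfl, if_neg hm0]
      · rw [A, if_neg (Nat.succ_ne_zero k), if_neg hg]
    have hz : ∀ p ∈ Finset.Icc 2 N,
        (if Finsupp.single p 1 ≤ m then A N (k+p) (m - Finsupp.single p 1) else 0) = 0 := by
      intro p hpIcc
      have hpN := Finset.mem_Icc.mp hpIcc
      split
      · next hle =>
        have hpi : p ≠ i := by
          intro hpi
          exact hiN (hpi ▸ ⟨hpN.1, hpN.2⟩)
        have hbad : ¬ Good N (m - Finsupp.single p 1) := by
          intro hgood
          refine hiN (hgood i ?_)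
          rw [Finsupp.mem_support_iff] at hi ⊢
          rwa [Finsupp.tsub_apply, Finsupp.single_apply, if_neg hpi, Nat.sub_zero]
        have hkp : k + p ≠ 0 := by omega
        rw [A, if_neg hkp, if_neg hbad]
      · rfl
    rw [hA1, hAk, Finset.sum_eq_zero hz, add_zero]
  · -- main (good) case
    have hf1 : 1 ≤ fW m := by
      rcases Nat.eq_zero_or_pos (fW m) with h | h
      · exact absurd (fW_eq_zero h) hm0
      · exact h
    have hef : 2 * fW m ≤ eW m := good_ef hg
    -- reduce the sum to the support
    have hfilter : (Finset.Icc 2 N).filter (fun p => Finsupp.single p 1 ≤ m) = m.support := by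
      ext q
      simp only [Finset.mem_filter, Finset.mem_Icc, Finsupp.single_le_iff,
        Finsupp.mem_support_iff]
      constructor
      · rintro ⟨-, h1⟩
        omega
      · intro hq
        have := hg q (Finsupp.mem_support_iff.mpr hq)
        exact ⟨⟨this.1, this.2⟩, by omega⟩
    rw [← Finset.sum_filter, hfilter]
    -- rewrite each term of the sum
    have hterm : ∀ p ∈ m.support, A N (k+p) (m - Finsupp.single p 1)
        = ((m p * (k+p) * (eW m + k - 1).factorial : ℕ) : ℚ)
          / (((eW m - fW m + (k+1)).factorial * pW m : ℕ) : ℚ) := by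
      intro p hp
      have hp1 : 1 ≤ m p := by
        have := Finsupp.mem_support_iff.mp hp
        omega
      have hple : Finsupp.single p 1 ≤ m := Finsupp.single_le_iff.mpr hp1
      have hp2 : 2 ≤ p := (hg p hp).1
      have he : eW m = eW (m - Finsupp.single p 1) + p := eW_sub hple
      have hfq : fW m = fW (m - Finsupp.single p 1) + 1 := fW_sub hple
      have hP : pW m = m p * pW (m - Finsupp.single p 1) := pW_sub hple
      have hg' : Good N (m - Finsupp.single p 1) := good_sub hg
      have hef' : 2 * fW (m - Finsupp.single p 1) ≤ eW (m - Finsupp.single p 1) := good_ef hg'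
      have hkp : k + p ≠ 0 := by omega
      rw [A, if_neg hkp, if_pos hg']
      have i1 : eW (m - Finsupp.single p 1) + (k + p) - 1 = eW m + k - 1 := by omega
      have i2 : eW (m - Finsupp.single p 1) - fW (m - Finsupp.single p 1) + (k + p)
          = eW m - fW m + (k+1) := by omega
      rw [i1, i2, hP]
      rw [div_eq_div_iff]
      · push_cast
        ring
      · exact Nat.cast_ne_zero.mpr
          (Nat.mul_ne_zero (Nat.factorial_ne_zero _) (pW_ne_zero _))
      · exact Nat.cast_ne_zero.mpr
          (Nat.mul_ne_zero (Nat.factorial_ne_zero _)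
            (Nat.mul_ne_zero (by omega) (pW_ne_zero _)))
    rw [Finset.sum_congr rfl hterm, ← Finset.sum_div, ← Nat.cast_sum]
    have hsum : ∑ p ∈ m.support, m p * (k+p) * (eW m + k - 1).factorial
        = (k * fW m + eW m) * (eW m + k - 1).factorial := by
      rw [← Finset.sum_mul]
      congr 1
      rw [fW, eW, Finsupp.sum, Finsupp.sum, Finset.mul_sum, ← Finset.sum_add_distrib]
      exact Finset.sum_congr rfl fun p _ => by ring
    rw [hsum]
    -- closed form for the middle term
    have hAk : A N k m = ((k * (eW m - fW m + (k+1)) * (eW m + k - 1).factorial : ℕ) : ℚ)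
        / (((eW m - fW m + (k+1)).factorial * pW m : ℕ) : ℚ) := by
      rcases k with _ | k
      · rw [A, if_pos rfl, if_neg hm0]
        simp
      · rw [A, if_neg (Nat.succ_ne_zero k), if_pos hg]
        rw [div_eq_div_iff]
        · have hfac : (eW m - fW m + (k+1+1)).factorial
              = (eW m - fW m + (k+1+1)) * (eW m - fW m + (k+1)).factorial := by
            rw [show eW m - fW m + (k+1+1) = (eW m - fW m + (k+1)) + 1 by omega,
              Nat.factorial_succ]
          rw [hfac]
          push_cast
          ring
        · exact Nat.cast_ne_zero.mpr
            (Nat.mul_ne_zero (Nat.factorial_ne_zero _) (pW_ne_zero _))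
        · exact Nat.cast_ne_zero.mpr
            (Nat.mul_ne_zero (Nat.factorial_ne_zero _) (pW_ne_zero _))
    rw [hAk, A, if_neg (Nat.succ_ne_zero k), if_pos hg, ← add_div]
    -- final numeric identity
    have hnum : ((k+1) * (eW m + (k+1) - 1).factorial : ℕ)
        = (k * (eW m - fW m + (k+1)) * (eW m + k - 1).factorial : ℕ)
          + (k * fW m + eW m) * (eW m + k - 1).factorial := by
      obtain ⟨d, hd⟩ : ∃ d, eW m = fW m + d := ⟨eW m - fW m, by omega⟩
      have hfac : (eW m + (k+1) - 1).factorial = (eW m + k) * (eW m + k - 1).factorial := by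
        rw [show eW m + (k+1) - 1 = (eW m + k - 1) + 1 by omega, Nat.factorial_succ]
        congr 1
        omega
      rw [hfac, show eW m - fW m + (k+1) = d + (k+1) by omega, hd]
      ring
    rw [hnum]
    push_cast
    ring

/-- the power series with coefficients `A N k` -/
noncomputable def Phi (N k : ℕ) : MvPowerSeries ℕ ℚ := fun m => A N k m

lemma coeff_Phi (N k : ℕ) (m : ℕ →₀ ℕ) : MvPowerSeries.coeff m (Phi N k) = A N k m := rfl

lemma Phi_zero (N : ℕ) : Phi N 0 = 1 := by
  apply MvPowerSeries.ext
  intro m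
  by_cases hm : m = 0 <;> simp [A, hm, coeff_Phi, MvPowerSeries.coeff_one]

lemma coeff_X_mul (φ : MvPowerSeries ℕ ℚ) (p : ℕ) (m : ℕ →₀ ℕ) :
    MvPowerSeries.coeff m (MvPowerSeries.X p * φ) =
      if Finsupp.single p 1 ≤ m then MvPowerSeries.coeff (m - Finsupp.single p 1) φ else 0 := by
  rw [MvPowerSeries.X, MvPowerSeries.coeff_monomial_mul]
  simp

/-- the series-level recurrence -/
lemma R_series (N k : ℕ) :
    Phi N (k+1) = Phi N k + ∑ p ∈ Finset.Icc 2 N, MvPowerSeries.X p * Phi N (k+p) := by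
  apply MvPowerSeries.ext
  intro m
  rw [map_add, map_sum, coeff_Phi, coeff_Phi, R_num]
  congr 1
  exact Finset.sum_congr rfl fun p _ => by rw [coeff_X_mul, coeff_Phi]

lemma conv (N : ℕ) : ∀ M : ℕ, ∀ m : ℕ →₀ ℕ, fW m ≤ M → ∀ j k : ℕ,
    MvPowerSeries.coeff m (Phi N j * Phi N k) = A N (j+k) m := by
  intro M
  induction M with
  | zero =>
    intro m hm j k
    have : m = 0 := fW_eq_zero (Nat.le_zero.mp hm)
    subst this
    rw [MvPowerSeries.coeff_mul]
    rw [Finsupp.antidiagonal_zero, Finset.sum_singleton, coeff_Phi, coeff_Phi,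
      A_zero_right, A_zero_right, A_zero_right, one_mul]
  | succ M ih =>
    intro m hm j k
    induction j with
    | zero => rw [Phi_zero, one_mul, coeff_Phi, zero_add]
    | succ j hj =>
      rw [R_series, add_mul, Finset.sum_mul, map_add, map_sum, hj]
      have hterm : ∀ p ∈ Finset.Icc 2 N,
          MvPowerSeries.coeff m ((MvPowerSeries.X p * Phi N (j+p)) * Phi N k) =
          (if Finsupp.single p 1 ≤ m then A N ((j+k)+p) (m - Finsupp.single p 1) else 0) := by
        intro p _
        rw [mul_assoc, coeff_X_mul]
        split
        · next hle =>
          have hfw : fW (m - Finsupp.single p 1) ≤ M := by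
            have := fW_sub hle
            omega
          rw [ih _ hfw (j+p) k]
          congr 1
          ring
        · rfl
      rw [Finset.sum_congr rfl hterm]
      have := R_num N (j+k) m
      rw [show j + 1 + k = (j+k) + 1 by ring, this]

lemma Phi_mul (N j k : ℕ) : Phi N j * Phi N k = Phi N (j+k) :=
  MvPowerSeries.ext fun m => by rw [conv N (fW m) m le_rfl, coeff_Phi]

lemma cast_sum_exists {ι : Type*} {s : Finset ι} {g : ι → ℚ}
    (h : ∀ p ∈ s, ∃ c : ℕ, g p = c) : ∃ c : ℕ, ∑ p ∈ s, g p = c := by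
  classical
  refine Finset.sum_induction g (fun x => ∃ c : ℕ, x = (c : ℚ)) ?_ ⟨0, by simp⟩ h
  rintro a b ⟨ca, rfl⟩ ⟨cb, rfl⟩
  exact ⟨ca + cb, by push_cast; ring⟩

lemma A_nat_zero (N : ℕ) (m : ℕ →₀ ℕ) : ∃ c : ℕ, A N 0 m = c := by
  classical
  refine ⟨if m = 0 then 1 else 0, ?_⟩
  rw [A, if_pos rfl]
  split <;> simp

/-- integrality -/
lemma A_nat (N : ℕ) : ∀ M : ℕ, ∀ m : ℕ →₀ ℕ, fW m ≤ M → ∀ k : ℕ, ∃ c : ℕ, A N k m = c := by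
  intro M
  induction M with
  | zero =>
    intro m hm k
    have : m = 0 := fW_eq_zero (Nat.le_zero.mp hm)
    subst this
    exact ⟨1, by rw [A_zero_right]; norm_num⟩
  | succ M ih =>
    intro m hm k
    induction k using Nat.strong_induction_on with
    | _ k ihk =>
      match k with
      | 0 => exact A_nat_zero N m
      | 1 =>
        rw [show (1:ℕ) = 0 + 1 from rfl, R_num]
        obtain ⟨c0, hc0⟩ := A_nat_zero N m
        have hterms : ∀ p ∈ Finset.Icc 2 N, ∃ c : ℕ,
            (if Finsupp.single p 1 ≤ m then A N (0+p) (m - Finsupp.single p 1) else 0)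
              = (c : ℚ) := by
          intro p hp
          split
          · next hle =>
            have hfw : fW (m - Finsupp.single p 1) ≤ M := by
              have := fW_sub hle
              omega
            exact ih _ hfw _
          · exact ⟨0, by norm_num⟩
        obtain ⟨cs, hcs⟩ := cast_sum_exists hterms
        exact ⟨c0 + cs, by rw [hc0, hcs]; push_cast; ring⟩
      | (k+2) =>
        have hc := conv N (fW m) m le_rfl (k+1) 1
        rw [show k+2 = (k+1)+1 from rfl, ← hc, MvPowerSeries.coeff_mul]
        refine cast_sum_exists ?_
        intro x hx
        have hxm : x.1 + x.2 = m := Finset.HasAntidiagonal.mem_antidiagonal.mp hx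
        have hfadd : fW x.1 + fW x.2 = fW m := by rw [← hxm, fW_add]
        rw [coeff_Phi, coeff_Phi]
        have h1 : ∃ c : ℕ, A N (k+1) x.1 = c := by
          by_cases he : x.1 = m
          · rw [he]
            exact ihk (k+1) (by omega)
          · have h2ne : x.2 ≠ 0 := by
              intro h2
              rw [h2, add_zero] at hxm
              exact he hxm
            have : 1 ≤ fW x.2 := by
              rcases Nat.eq_zero_or_pos (fW x.2) with h | h
              · exact absurd (fW_eq_zero h) h2ne
              · exact h
            exact ih x.1 (by omega) _
        have h2 : ∃ c : ℕ, A N 1 x.2 = c := by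
          by_cases he : x.2 = m
          · rw [he]
            exact ihk 1 (by omega)
          · have h1ne : x.1 ≠ 0 := by
              intro h1'
              rw [h1', zero_add] at hxm
              exact he hxm
            have : 1 ≤ fW x.1 := by
              rcases Nat.eq_zero_or_pos (fW x.1) with h | h
              · exact absurd (fW_eq_zero h) h1ne
              · exact h
            exact ih x.2 (by omega) _
        obtain ⟨c1, hc1⟩ := h1
        obtain ⟨c2, hc2⟩ := h2
        exact ⟨c1 * c2, by rw [hc1, hc2]; push_cast; ring⟩

end SoftPolyAux

open SoftPolyAux in
/-- Wildberger's Soft Polynomial Formula: the hyper-Catalan generating series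
`S = ∑_m C_m t^m` (over types `m` supported on `{2,…,N}`, with
`C_m = (E_m-1)!/((V_m-1)!·∏ (m i)!)`) satisfies `S = 1 + t₂S² + ⋯ + t_N S^N`. -/
theorem soft_polynomial_formula (N : ℕ) (S : MvPowerSeries ℕ ℚ)
    (hS : ∀ m : ℕ →₀ ℕ, MvPowerSeries.coeff m S =
      if ∀ i ∈ m.support, 2 ≤ i ∧ i ≤ N then
        ((((1 + m.sum fun i v => i * v) - 1).factorial /
            (((2 + m.sum fun i v => (i - 1) * v) - 1).factorial *
              m.prod fun _ v => v.factorial) : ℕ) : ℚ)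
      else 0) :
    S = 1 + ∑ i ∈ Finset.Icc 2 N, MvPowerSeries.X i * S ^ i := by
  have hSPhi : S = Phi N 1 := by
    apply MvPowerSeries.ext
    intro m
    rw [hS m, coeff_Phi]
    by_cases hg : ∀ i ∈ m.support, 2 ≤ i ∧ i ≤ N
    · rw [if_pos hg]
      have hg' : Good N m := hg
      have hef : 2 * fW m ≤ eW m := good_ef hg'
      have hsplit : eW m = (m.sum fun i v => (i-1)*v) + fW m := by
        rw [eW, fW, Finsupp.sum, Finsupp.sum, Finsupp.sum, ← Finset.sum_add_distrib]
        refine Finset.sum_congr rfl fun i hi => ?_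
        have h2 := (hg' i hi).1
        calc i * m i = (i - 1 + 1) * m i := by rw [show i - 1 + 1 = i by omega]
        _ = (i-1) * m i + m i := by ring
      have hidx1 : (1 + m.sum fun i v => i * v) - 1 = eW m := by
        rw [show m.sum (fun i v => i * v) = eW m from rfl]
        omega
      have hidx2 : (2 + m.sum fun i v => (i-1) * v) - 1 = (m.sum fun i v => (i-1) * v) + 1 := by
        omega
      have hidx3 : eW m - fW m + 1 = (m.sum fun i v => (i-1) * v) + 1 := by omega
      obtain ⟨c, hc⟩ := A_nat N (fW m) m le_rfl 1
      have hA : A N 1 m = ((eW m).factorial : ℚ)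
          / ((((m.sum fun i v => (i-1) * v) + 1).factorial * pW m : ℕ) : ℚ) := by
        rw [A, if_neg one_ne_zero, if_pos hg', hidx3]
        norm_num
      have hD : 0 < ((m.sum fun i v => (i-1) * v) + 1).factorial * pW m :=
        Nat.pos_of_ne_zero (Nat.mul_ne_zero (Nat.factorial_ne_zero _) (pW_ne_zero _))
      have hmul : c * (((m.sum fun i v => (i-1) * v) + 1).factorial * pW m)
          = (eW m).factorial := by
        have hcc : (c : ℚ) = ((eW m).factorial : ℚ)
            / ((((m.sum fun i v => (i-1) * v) + 1).factorial * pW m : ℕ) : ℚ) := by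
          rw [← hc, hA]
        rw [eq_div_iff (Nat.cast_ne_zero.mpr hD.ne')] at hcc
        exact_mod_cast hcc
      have hdiv : (eW m).factorial
          / (((m.sum fun i v => (i-1) * v) + 1).factorial * pW m) = c := by
        rw [← hmul, Nat.mul_div_cancel _ hD]
      rw [hidx1, hidx2, show (m.prod fun _ v => v.factorial) = pW m from rfl, hdiv, hc]
    · rw [if_neg hg, A, if_neg one_ne_zero, if_neg (show ¬ Good N m from hg)]
  have hpow : ∀ i : ℕ, S ^ i = Phi N i := by
    intro i
    induction i with
    | zero => rw [pow_zero, Phi_zero]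
    | succ i ihi => rw [pow_succ, ihi, hSPhi, Phi_mul]
  calc S = Phi N 1 := hSPhi
  _ = Phi N 0 + ∑ p ∈ Finset.Icc 2 N, MvPowerSeries.X p * Phi N (0+p) := R_series N 0
  _ = 1 + ∑ p ∈ Finset.Icc 2 N, MvPowerSeries.X p * S ^ p := by
      rw [Phi_zero]
      congr 1
      exact Finset.sum_congr rfl fun p _ => by rw [zero_add, hpow]
end

section
/- Let T ∈ ℚ[[t₁, t₂, …, t_N]] satisfy T = 1 + t₁T + t₂T² + ⋯ + t_N T^N with constant term 1. Then the coefficient of t₁^{m₁} t₂^{m₂} ⋯ in T equals (m₁ + E_m − 1)!/((V_m − 1)!·m₁!·∏_{i≥2} mᵢ!), where E_m = 1 + ∑_{i≥2} i·mᵢ and V_m = 2 + ∑_{i≥2}(i−1)mᵢ. -/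
open MvPowerSeries Finsupp Finset

namespace Tubdigon

def sE (d : ℕ →₀ ℕ) : ℕ := d.sum fun i m => i * m
def pV (d : ℕ →₀ ℕ) : ℕ := d.sum fun _ m => m
def qE (d : ℕ →₀ ℕ) : ℕ := d.sum fun i m => (i - 1) * m
def PP (d : ℕ →₀ ℕ) : ℕ := d.prod fun _ m => m.factorial

noncomputable def F (k : ℕ) (d : ℕ →₀ ℕ) : ℚ :=
  k * (sE d + k - 1).factorial / ((qE d + k).factorial * PP d)

lemma PP_pos (d : ℕ →₀ ℕ) : 0 < PP d :=
  Finset.prod_pos fun i _ => Nat.factorial_pos _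

lemma sE_add (d e : ℕ →₀ ℕ) : sE (d + e) = sE d + sE e :=
  Finsupp.sum_add_index' (fun a => by simp) (fun a b c => by ring)

lemma pV_add (d e : ℕ →₀ ℕ) : pV (d + e) = pV d + pV e :=
  Finsupp.sum_add_index' (fun a => rfl) (fun a b c => rfl)

lemma qE_add (d e : ℕ →₀ ℕ) : qE (d + e) = qE d + qE e :=
  Finsupp.sum_add_index' (fun a => by simp) (fun a b c => by ring)

lemma sE_single (i n : ℕ) : sE (Finsupp.single i n) = i * n := by
  simp [sE, Finsupp.sum_single_index]

lemma pV_single (i n : ℕ) : pV (Finsupp.single i n) = n := by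
  simp [pV, Finsupp.sum_single_index]

lemma qE_single (i n : ℕ) : qE (Finsupp.single i n) = (i - 1) * n := by
  simp [qE, Finsupp.sum_single_index]

lemma sub_add_single (d : ℕ →₀ ℕ) (i : ℕ) (hi : d i ≠ 0) :
    (d - Finsupp.single i 1) + Finsupp.single i 1 = d := by
  ext j
  simp only [Finsupp.add_apply, Finsupp.tsub_apply, Finsupp.single_apply]
  rcases eq_or_ne i j with rfl | h
  · simp; omega
  · simp [h]

lemma PP_sub_single (d : ℕ →₀ ℕ) (i : ℕ) (hi : d i ≠ 0) :
    PP d = d i * PP (d - Finsupp.single i 1) := by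
  set d' : ℕ →₀ ℕ := d - Finsupp.single i 1 with hd'
  have hd'app : ∀ j, d' j = d j - (Finsupp.single i 1) j := fun j => Finsupp.tsub_apply d _ j
  have hsub : d'.support ⊆ d.support := by
    intro j hj
    simp only [Finsupp.mem_support_iff] at hj ⊢
    rw [hd'app] at hj
    intro h; apply hj; simp [h]
  have h1 : PP d' = ∏ j ∈ d.support, (d' j).factorial :=
    Finsupp.prod_of_support_subset _ hsub _ (fun j _ => rfl)
  have hmem : i ∈ d.support := Finsupp.mem_support_iff.2 hi
  rw [PP, Finsupp.prod, h1, ← Finset.mul_prod_erase _ _ hmem, ← Finset.mul_prod_erase _ _ hmem]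
  have h2 : (d' i).factorial * d i = (d i).factorial := by
    rw [hd'app]
    simp only [Finsupp.single_apply, if_pos rfl]
    obtain ⟨m, hm⟩ : ∃ m, d i = m + 1 := ⟨d i - 1, by omega⟩
    rw [hm]; simp [Nat.factorial_succ]; ring
  rw [← h2]
  have h3 : ∀ j ∈ d.support.erase i, (d' j).factorial = (d j).factorial := by
    intro j hj
    have hij : j ≠ i := Finset.ne_of_mem_erase hj
    rw [hd'app]
    simp [Finsupp.single_apply, Ne.symm hij]
  rw [Finset.prod_congr rfl h3]; ring

lemma sE_eq (d : ℕ →₀ ℕ) (hd0 : d 0 = 0) : sE d = pV d + qE d := by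
  rw [sE, pV, qE, Finsupp.sum, Finsupp.sum, Finsupp.sum, ← Finset.sum_add_distrib]
  apply Finset.sum_congr rfl; intro j hj
  have hj0 : j ≠ 0 := by
    intro h; exact (Finsupp.mem_support_iff.1 hj) (h ▸ hd0)
  obtain ⟨j', rfl⟩ : ∃ j', j = j' + 1 := ⟨j - 1, by omega⟩
  simp [Nat.add_mul]; ring

lemma pV_pos (d : ℕ →₀ ℕ) (hne : d ≠ 0) : 1 ≤ pV d := by
  obtain ⟨i, hi⟩ := Finsupp.support_nonempty_iff.2 hne
  have : 0 < d i := Nat.pos_of_ne_zero (Finsupp.mem_support_iff.1 hi)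
  calc 1 ≤ d i := this
  _ ≤ ∑ j ∈ d.support, d j := Finset.single_le_sum (fun j _ => Nat.zero_le _) hi
  _ = pV d := rfl

lemma F_identity (N : ℕ) (d : ℕ →₀ ℕ) (hd0 : d 0 = 0) (hdN : ∀ i > N, d i = 0)
    (hne : d ≠ 0) (k : ℕ) :
    F (k+1) d = F k d +
      ∑ i ∈ (Finset.Icc 1 N).filter (fun i => d i ≠ 0), F (i+k) (d - Finsupp.single i 1) := by
  have hA : (Finset.Icc 1 N).filter (fun i => d i ≠ 0) = d.support := by
    ext j
    simp only [Finset.mem_filter, Finset.mem_Icc, Finsupp.mem_support_iff]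
    constructor
    · rintro ⟨_, h⟩; exact h
    · intro h
      refine ⟨⟨?_, ?_⟩, h⟩
      · rcases Nat.eq_zero_or_pos j with rfl | h1
        · exact absurd hd0 h
        · exact h1
      · by_contra hc; exact h (hdN j (by omega))
  have hspq := sE_eq d hd0
  have hp1 := pV_pos d hne
  obtain ⟨c, hc⟩ : ∃ c, pV d = c + 1 := ⟨pV d - 1, by omega⟩
  have hterm : ∀ i ∈ d.support, F (i+k) (d - Finsupp.single i 1)
      = ((i : ℚ) + k) * (d i : ℚ) * ((c + qE d + k).factorial : ℚ) /
        ((((qE d + k + 1) * (qE d + k).factorial : ℕ) : ℚ) * (PP d : ℚ)) := by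
    intro i hi
    have hdi : d i ≠ 0 := Finsupp.mem_support_iff.1 hi
    have hi1 : 1 ≤ i := by
      rcases Nat.eq_zero_or_pos i with rfl | h
      · exact absurd hd0 hdi
      · exact h
    set d' : ℕ →₀ ℕ := d - Finsupp.single i 1 with hd'
    have hdd : d' + Finsupp.single i 1 = d := sub_add_single d i hdi
    have hs : sE d = sE d' + i := by
      conv_lhs => rw [← hdd]
      rw [sE_add, sE_single]; ring
    have hp : pV d = pV d' + 1 := by
      conv_lhs => rw [← hdd]
      rw [pV_add, pV_single]
    have hq' : qE d = qE d' + (i - 1) := by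
      conv_lhs => rw [← hdd]
      rw [qE_add, qE_single]; ring
    have hd'0 : d' 0 = 0 := by
      rw [hd', Finsupp.tsub_apply]; simp [hd0]
    have hs' : sE d' = pV d' + qE d' := sE_eq d' hd'0
    have e1 : sE d' + (i + k) - 1 = c + qE d + k := by omega
    have e2 : qE d' + (i + k) = (qE d + k) + 1 := by omega
    have hPP := PP_sub_single d i hdi
    rw [F, e1, e2, Nat.factorial_succ]
    have hPPd' : ((PP d' : ℕ) : ℚ) ≠ 0 := Nat.cast_ne_zero.2 (PP_pos _).ne'
    have hPPd : ((PP d : ℕ) : ℚ) ≠ 0 := Nat.cast_ne_zero.2 (PP_pos _).ne'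
    have hdiQ : ((d i : ℕ) : ℚ) ≠ 0 := Nat.cast_ne_zero.2 hdi
    have hfac : (((qE d + k).factorial : ℕ) : ℚ) ≠ 0 :=
      Nat.cast_ne_zero.2 (Nat.factorial_pos _).ne'
    have hPPQ : ((PP d : ℕ) : ℚ) = (d i : ℚ) * (PP d' : ℚ) := by
      rw [hPP]; push_cast; ring
    rw [div_eq_div_iff (by positivity) (by positivity), hPPQ]
    push_cast
    ring
  rw [hA, Finset.sum_congr rfl hterm, ← Finset.sum_div, ← Finset.sum_mul]
  have hsumnat : ∑ i ∈ d.support, (i + k) * d i = sE d + k * pV d := by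
    rw [sE, pV, Finsupp.sum, Finsupp.sum, Finset.mul_sum, ← Finset.sum_add_distrib]
    exact Finset.sum_congr rfl (fun i _ => by ring)
  have hsum : ∑ i ∈ d.support, ((i : ℚ) + k) * (d i : ℚ)
      = (((c + qE d + 1) + k * (c + 1) : ℕ) : ℚ) := by
    have e7 : (c + qE d + 1) + k * (c + 1) = sE d + k * pV d := by rw [hspq, hc]; ring
    rw [e7, ← hsumnat]
    push_cast
    exact Finset.sum_congr rfl (fun i _ => by push_cast; ring)
  rw [hsum]
  rw [F, F]
  have e3 : sE d + (k+1) - 1 = (c + qE d + k) + 1 := by omega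
  have e4 : qE d + (k+1) = (qE d + k) + 1 := by omega
  have e5 : sE d + k - 1 = c + qE d + k := by omega
  rw [e3, e4, e5, Nat.factorial_succ, Nat.factorial_succ]
  have hPPd : ((PP d : ℕ) : ℚ) ≠ 0 := Nat.cast_ne_zero.2 (PP_pos _).ne'
  have hfac : (((qE d + k).factorial : ℕ) : ℚ) ≠ 0 :=
    Nat.cast_ne_zero.2 (Nat.factorial_pos _).ne'
  push_cast
  field_simp
  ring


lemma F_zero_d (k : ℕ) : F (k+1) 0 = 1 := by
  have h0 : sE 0 = 0 := by simp [sE]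
  have h1 : pV 0 = 0 := by simp [pV]
  have h2 : qE 0 = 0 := by simp [qE]
  have h3 : PP 0 = 1 := by simp [PP]
  rw [F, h0, h2, h3]
  simp only [Nat.zero_add, Nat.add_sub_cancel, Nat.cast_one, mul_one]
  rw [Nat.factorial_succ]
  have : ((k+1 : ℕ) : ℚ) ≠ 0 := by positivity
  have : ((Nat.factorial k : ℕ) : ℚ) ≠ 0 := Nat.cast_ne_zero.2 (Nat.factorial_pos _).ne'
  push_cast
  field_simp

lemma F_zero_k (d : ℕ →₀ ℕ) : F 0 d = 0 := by simp [F]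

lemma coeff_pow (N : ℕ) (T : MvPowerSeries ℕ ℚ)
    (hconst : MvPowerSeries.constantCoeff (σ := ℕ) (R := ℚ) T = 1)
    (hT : T = 1 + ∑ i ∈ Finset.Icc 1 N, MvPowerSeries.X i * T ^ i) :
    ∀ n (d : ℕ →₀ ℕ), pV d = n → d 0 = 0 → (∀ i > N, d i = 0) → ∀ k,
      MvPowerSeries.coeff (R := ℚ) d (T ^ k) =
        if k = 0 then (if d = 0 then 1 else 0) else F k d := by
  intro n
  induction n using Nat.strong_induction_on with
  | _ n IH =>
  intro d hdn hd0 hdN k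
  induction k with
  | zero =>
    classical
    simp [pow_zero, MvPowerSeries.coeff_one]
  | succ k IHk =>
    have hstep : T ^ (k+1) = T ^ k + ∑ i ∈ Finset.Icc 1 N, X i * T ^ (i+k) := by
      calc T ^ (k+1) = (1 + ∑ i ∈ Finset.Icc 1 N, X i * T ^ i) * T ^ k := by
            rw [← hT, pow_succ']
        _ = T ^ k + ∑ i ∈ Finset.Icc 1 N, X i * T ^ (i+k) := by
            rw [add_mul, one_mul, Finset.sum_mul]
            congr 1
            exact Finset.sum_congr rfl fun i _ => by rw [mul_assoc, ← pow_add]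
    rw [hstep, map_add, map_sum]
    have hcoeffi : ∀ i ∈ Finset.Icc 1 N, MvPowerSeries.coeff (R := ℚ) d (X i * T ^ (i+k)) =
        if d i ≠ 0 then F (i+k) (d - Finsupp.single i 1) else 0 := by
      intro i hi
      classical
      rw [X_def, MvPowerSeries.coeff_monomial_mul]
      have hi1 : 1 ≤ i := (Finset.mem_Icc.1 hi).1
      by_cases hdi : d i = 0
      · rw [if_neg, if_neg (by simp [hdi])]
        intro hle
        exact absurd (Finsupp.single_le_iff.1 hle) (by omega)
      · rw [if_pos (Finsupp.single_le_iff.2 (by omega)), one_mul, if_pos hdi]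
        have hne : d ≠ 0 := by
          intro h; rw [h] at hdi; exact hdi rfl
        have hn1 : 1 ≤ n := hdn ▸ pV_pos d hne
        set d' : ℕ →₀ ℕ := d - Finsupp.single i 1 with hd'
        have hdd : d' + Finsupp.single i 1 = d := sub_add_single d i hdi
        have hp : pV d = pV d' + 1 := by
          conv_lhs => rw [← hdd]
          rw [pV_add, pV_single]
        have hd'0 : d' 0 = 0 := by
          rw [hd', Finsupp.tsub_apply]; simp [hd0]
        have hd'N : ∀ j > N, d' j = 0 := by
          intro j hj
          rw [hd', Finsupp.tsub_apply]
          simp [hdN j hj]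
        have := IH (n - 1) (by omega) d' (by omega) hd'0 hd'N (i + k)
        rw [this, if_neg (by omega)]
    rw [Finset.sum_congr rfl hcoeffi, Finset.sum_ite, Finset.sum_const, smul_zero, add_zero]
    by_cases hd : d = 0
    · subst hd
      have hfilter : (Finset.Icc 1 N).filter (fun i => (0 : ℕ →₀ ℕ) i ≠ 0) = ∅ := by
        apply Finset.filter_false_of_mem
        intro i _
        simp
      rw [hfilter, Finset.sum_empty, add_zero, IHk, if_neg (Nat.succ_ne_zero k)]
      rcases Nat.eq_zero_or_pos k with rfl | hk
      · simp [F_zero_d]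
      · obtain ⟨m, rfl⟩ : ∃ m, k = m + 1 := ⟨k - 1, by omega⟩
        rw [if_neg (Nat.succ_ne_zero m), F_zero_d, F_zero_d]
    · rw [IHk]
      have hIk : (if k = 0 then (if d = 0 then (1:ℚ) else 0) else F k d) = F k d := by
        rcases Nat.eq_zero_or_pos k with rfl | hk
        · rw [if_pos rfl, if_neg hd, F_zero_k]
        · rw [if_neg (by omega)]
      rw [hIk, if_neg (Nat.succ_ne_zero k), F_identity N d hd0 hdN hd k]


lemma sum_nat_cast {s : Finset ℕ} {f : ℕ → ℚ} (h : ∀ i ∈ s, ∃ m : ℕ, f i = m) :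
    ∃ m : ℕ, ∑ i ∈ s, f i = m := by
  classical
  induction s using Finset.induction_on with
  | empty => exact ⟨0, by simp⟩
  | @insert x s' hx ih =>
    obtain ⟨m1, hm1⟩ := h _ (Finset.mem_insert_self _ _)
    obtain ⟨m2, hm2⟩ := ih (fun i hi => h i (Finset.mem_insert_of_mem hi))
    exact ⟨m1 + m2, by rw [Finset.sum_insert hx, hm1, hm2]; push_cast; ring⟩

lemma F_nat (N : ℕ) : ∀ n (d : ℕ →₀ ℕ), pV d = n → d 0 = 0 → (∀ i > N, d i = 0) → ∀ k,
    ∃ m : ℕ, F k d = m := by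
  intro n
  induction n using Nat.strong_induction_on with
  | _ n IH =>
  intro d hdn hd0 hdN k
  induction k with
  | zero => exact ⟨0, by simp [F_zero_k]⟩
  | succ k IHk =>
    by_cases hd : d = 0
    · exact ⟨1, by rw [hd, F_zero_d]; norm_num⟩
    · rw [F_identity N d hd0 hdN hd k]
      obtain ⟨m0, hm0⟩ := IHk
      have hn1 : 1 ≤ n := hdn ▸ pV_pos d hd
      have hterms : ∀ i ∈ (Finset.Icc 1 N).filter (fun i => d i ≠ 0),
          ∃ m : ℕ, F (i+k) (d - Finsupp.single i 1) = m := by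
        intro i hi
        simp only [Finset.mem_filter, Finset.mem_Icc] at hi
        obtain ⟨⟨hi1, hiN⟩, hdi⟩ := hi
        set d' : ℕ →₀ ℕ := d - Finsupp.single i 1 with hd'
        have hdd : d' + Finsupp.single i 1 = d := sub_add_single d i hdi
        have hp : pV d = pV d' + 1 := by
          conv_lhs => rw [← hdd]
          rw [pV_add, pV_single]
        have hd'0 : d' 0 = 0 := by
          rw [hd', Finsupp.tsub_apply]; simp [hd0]
        have hd'N : ∀ j > N, d' j = 0 := by
          intro j hj
          rw [hd', Finsupp.tsub_apply]
          simp [hdN j hj]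
        exact IH (n - 1) (by omega) d' (by omega) hd'0 hd'N (i + k)
      obtain ⟨m1, hm1⟩ := sum_nat_cast hterms
      exact ⟨m0 + m1, by rw [hm0, hm1]; push_cast; ring⟩

end Tubdigon

open Tubdigon Finsupp Finset in
/-- The tubdigon generating series: if `T ∈ ℚ[[t₁,…,t_N]]` has constant term `1`
and satisfies `T = 1 + t₁T + t₂T² + ⋯ + t_N T^N`, then the coefficient of
`t₁^{m₁} t₂^{m₂} ⋯` in `T` is `(m₁ + E_m - 1)!/((V_m - 1)!·m₁!·∏_{i≥2}(mᵢ)!)`. -/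
theorem tubdigon_series_coeff (N : ℕ) (T : MvPowerSeries ℕ ℚ)
    (hconst : MvPowerSeries.constantCoeff (σ := ℕ) (R := ℚ) T = 1)
    (hT : T = 1 + ∑ i ∈ Finset.Icc 1 N, MvPowerSeries.X i * T ^ i) :
    ∀ d : ℕ →₀ ℕ, d 0 = 0 → (∀ i > N, d i = 0) →
      MvPowerSeries.coeff (R := ℚ) d T =
        (((d 1 + (1 + ∑ i ∈ d.support.filter (2 ≤ ·), i * d i) - 1).factorial /
            (((2 + ∑ i ∈ d.support.filter (2 ≤ ·), (i - 1) * d i) - 1).factorial *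
              (d 1).factorial *
              ∏ i ∈ d.support.filter (2 ≤ ·), (d i).factorial) : ℕ) : ℚ) := by
  intro d hd0 hdN
  classical
  have hkey := coeff_pow N T hconst hT (pV d) d rfl hd0 hdN 1
  rw [pow_one, if_neg one_ne_zero] at hkey
  -- relate the statement's quantities to sE, qE, PP
  have hsub1 : d.support.filter (fun i => ¬ 2 ≤ i) ⊆ {1} := by
    intro j hj
    simp only [Finset.mem_filter, Finsupp.mem_support_iff] at hj
    simp only [Finset.mem_singleton]
    rcases Nat.eq_zero_or_pos j with rfl | h
    · exact absurd hd0 hj.1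
    · omega
  have hmem1 : ∀ x ∈ ({1} : Finset ℕ), x ∉ d.support.filter (fun i => ¬ 2 ≤ i) → d x = 0 := by
    intro x hx hnx
    simp only [Finset.mem_singleton] at hx
    subst hx
    by_contra h
    exact hnx (by simp [Finset.mem_filter, Finsupp.mem_support_iff, h])
  have hfilter_eq : d.support.filter (2 ≤ ·) = d.support.filter (fun i => 2 ≤ i) := rfl
  have hsE : sE d = d 1 + ∑ i ∈ d.support.filter (2 ≤ ·), i * d i := by
    rw [hfilter_eq]
    have h1 : sE d = (∑ i ∈ d.support.filter (fun i => 2 ≤ i), i * d i)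
        + ∑ i ∈ d.support.filter (fun i => ¬ 2 ≤ i), i * d i :=
      (Finset.sum_filter_add_sum_filter_not _ _ _).symm
    have h2 : ∑ i ∈ d.support.filter (fun i => ¬ 2 ≤ i), i * d i = d 1 := by
      rw [Finset.sum_subset hsub1 (fun x hx hnx => by rw [hmem1 x hx hnx]; ring)]
      simp
    omega
  have hqE : qE d = ∑ i ∈ d.support.filter (2 ≤ ·), (i - 1) * d i := by
    rw [hfilter_eq]
    have h1 : qE d = (∑ i ∈ d.support.filter (fun i => 2 ≤ i), (i - 1) * d i)
        + ∑ i ∈ d.support.filter (fun i => ¬ 2 ≤ i), (i - 1) * d i :=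
      (Finset.sum_filter_add_sum_filter_not _ _ _).symm
    have h2 : ∑ i ∈ d.support.filter (fun i => ¬ 2 ≤ i), (i - 1) * d i = 0 := by
      rw [Finset.sum_subset hsub1 (fun x hx hnx => by rw [hmem1 x hx hnx]; ring)]
      simp
    omega
  have hPP : PP d = (d 1).factorial * ∏ i ∈ d.support.filter (2 ≤ ·), (d i).factorial := by
    rw [hfilter_eq]
    have h1 : PP d = (∏ i ∈ d.support.filter (fun i => 2 ≤ i), (d i).factorial)
        * ∏ i ∈ d.support.filter (fun i => ¬ 2 ≤ i), (d i).factorial :=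
      (Finset.prod_filter_mul_prod_filter_not _ _ _).symm
    have h2 : ∏ i ∈ d.support.filter (fun i => ¬ 2 ≤ i), (d i).factorial = (d 1).factorial := by
      rw [Finset.prod_subset hsub1 (fun x hx hnx => by rw [hmem1 x hx hnx]; rfl)]
      simp
    rw [h1, h2]; ring
  have hnum : d 1 + (1 + ∑ i ∈ d.support.filter (2 ≤ ·), i * d i) - 1 = sE d := by omega
  have hden : (2 + ∑ i ∈ d.support.filter (2 ≤ ·), (i - 1) * d i) - 1 = qE d + 1 := by omega
  obtain ⟨m, hm⟩ := F_nat N (pV d) d rfl hd0 hdN 1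
  have hF1 : F 1 d = ((sE d).factorial : ℚ) / (((qE d + 1).factorial : ℚ) * (PP d : ℚ)) := by
    rw [F]
    norm_num
  have hpos : 0 < (qE d + 1).factorial * PP d :=
    Nat.mul_pos (Nat.factorial_pos _) (PP_pos d)
  have hcast : ((sE d).factorial : ℚ) = (m : ℚ) * (((qE d + 1).factorial * PP d : ℕ) : ℚ) := by
    rw [hF1] at hm
    have hD : ((qE d + 1).factorial : ℚ) * (PP d : ℚ) ≠ 0 := by
      have h : (0:ℚ) < ((qE d + 1).factorial : ℚ) * (PP d : ℚ) := by exact_mod_cast hpos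
      exact h.ne'
    rw [div_eq_iff hD] at hm
    push_cast
    linear_combination hm
  have hnatdiv : (sE d).factorial / ((qE d + 1).factorial * PP d) = m := by
    apply Nat.div_eq_of_eq_mul_left hpos
    exact_mod_cast hcast
  rw [hkey, hm, hnum, hden]
  rw [mul_assoc, ← hPP, hnatdiv]
end
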